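/- arXiv:1904.00033 — 6 statements merged into one kernel-verified Lean document; each statement's English description precedes it below -/
import Mathlib

section
/- Let R be a regular S-graded ring such that S satisfies condition (Δ). Then the graded Brown–McCoy radical of R equals R, i.e., 𝒢(R) = R, if and only if every homogeneous element of R is G-regular. -/
/-!
Common framework: S-graded rings (rings that are direct sums of additive
subgroups indexed by a set S, with homogeneous products homogeneous),
homogeneous ideals, graded modules, and the various Brown--McCoy radicals.
-/

universe u v w

/-- An `S`-graded ring structure on a (not necessarily unital or commutative)
associative ring `R`: a family of additive subgroups indexed by a nonempty set `S`
whose internal direct sum is `R`, such that whenever `R_s · R_t ≠ 0` there is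
`u ∈ S` with `R_s · R_t ⊆ R_u`. -/
structure SGraded (S : Type v) (R : Type w) [NonUnitalRing R] where
  component : S → AddSubgroup R
  nonemptyS : Nonempty S
  independent : iSupIndep component
  iSup_eq_top : (⨆ s, component s) = ⊤
  mul_cond : ∀ s t : S, (∃ a ∈ component s, ∃ b ∈ component t, a * b ≠ 0) →
    ∃ u : S, ∀ a ∈ component s, ∀ b ∈ component t, a * b ∈ component u

namespace SGraded

variable {S : Type v} {R : Type w} [NonUnitalRing R] (G : SGraded S R)

/-- A homogeneous element. -/
def Homog (a : R) : Prop := ∃ s, a ∈ G.component s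

/-- The homogeneous part `A = ⋃ s, R_s` of `R`. -/
def homogPart : Set R := {a : R | G.Homog a}

/-- Two homogeneous elements are addable if one is `0` or they have the same degree. -/
def Addable (a b : R) : Prop := a = 0 ∨ b = 0 ∨ ∃ s, a ∈ G.component s ∧ b ∈ G.component s

/-- `ε ∈ S` is idempotent: `R_ε · R_ε ≠ 0` and `R_ε · R_ε ⊆ R_ε`. -/
def IsIdem (ε : S) : Prop :=
  (∃ a ∈ G.component ε, ∃ b ∈ G.component ε, a * b ≠ 0) ∧
  ∀ a ∈ G.component ε, ∀ b ∈ G.component ε, a * b ∈ G.component ε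

/-- Condition (Δ): the product of two nonidempotent degrees is never idempotent. -/
def CondDelta : Prop := ∀ s t u : S,
  (∃ a ∈ G.component s, ∃ b ∈ G.component t, a * b ≠ 0) →
  (∀ a ∈ G.component s, ∀ b ∈ G.component t, a * b ∈ G.component u) →
  ¬ G.IsIdem s → ¬ G.IsIdem t → ¬ G.IsIdem u

/-- Regularity (cancellativity) of the grading. -/
def Regular : Prop := ∀ a b c : R, G.Homog a → G.Homog b → G.Homog c →
  a ≠ 0 → b ≠ 0 → c ≠ 0 →
  ((a * c ≠ 0 → b * c ≠ 0 → G.Addable (a * c) (b * c) → G.Addable a b) ∧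
   (c * a ≠ 0 → c * b ≠ 0 → G.Addable (c * a) (c * b) → G.Addable a b))

end SGraded

section Rings

variable {R : Type w} [NonUnitalRing R]

/-- A right ideal of `R`, as an additive subgroup. -/
def IsRightIdeal (I : AddSubgroup R) : Prop := ∀ x ∈ I, ∀ r : R, x * r ∈ I

/-- A two-sided ideal of `R`, as an additive subgroup. -/
def IsTwoSidedIdeal' (I : AddSubgroup R) : Prop := ∀ x ∈ I, ∀ r : R, x * r ∈ I ∧ r * x ∈ I

/-- The right ideal of `R` generated by a set. -/
def rightIdealGen (T : Set R) : AddSubgroup R :=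
  sInf {I : AddSubgroup R | T ⊆ I ∧ IsRightIdeal I}

/-- A right ideal of the (sub)ring `E`, as an additive subgroup of `R` contained in `E`. -/
def IsRightIdealOn (E I : AddSubgroup R) : Prop := I ≤ E ∧ ∀ x ∈ I, ∀ r ∈ E, x * r ∈ I

/-- A two-sided ideal of the (sub)ring `E`. -/
def IsIdealOn (E I : AddSubgroup R) : Prop :=
  I ≤ E ∧ ∀ x ∈ I, ∀ r ∈ E, x * r ∈ I ∧ r * x ∈ I

/-- The largest two-sided ideal of the (sub)ring `E` contained in `J`. -/
def coreOn (E J : AddSubgroup R) : AddSubgroup R :=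
  sSup {K : AddSubgroup R | IsIdealOn E K ∧ K ≤ J}

/-- A maximal right ideal of the (sub)ring `E`. -/
def IsMaxRightIdealOn (E J : AddSubgroup R) : Prop :=
  IsRightIdealOn E J ∧ J ≠ E ∧ ∀ K : AddSubgroup R, IsRightIdealOn E K → J < K → K ≤ E → K = E

/-- A modular two-sided ideal of the (sub)ring `E`:
there is `e ∈ E` with `ea - a ∈ J` and `ae - a ∈ J` for all `a ∈ E`. -/
def IsModularIdealOn (E J : AddSubgroup R) : Prop :=
  ∃ e ∈ E, ∀ a ∈ E, e * a - a ∈ J ∧ a * e - a ∈ J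

/-- The classical Brown--McCoy radical of the (sub)ring `E`: the intersection of all
two-sided ideals `I` of `E` such that `E/I` is a simple ring with identity. -/
def brownMcCoyOn (E : AddSubgroup R) : Set R :=
  {a : R | a ∈ E ∧ ∀ I : AddSubgroup R, IsIdealOn E I → I ≠ E →
    IsModularIdealOn E I →
    (∀ K : AddSubgroup R, IsIdealOn E K → I ≤ K → K ≤ E → K = I ∨ K = E) → a ∈ I}

/-- `e` is a unity modulo `I`. -/
def IsUnityMod (e : R) (I : AddSubgroup R) : Prop := ∀ a : R, e * a - a ∈ I ∧ a * e - a ∈ I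

/-- `x` is a G-regular element of the (sub)ring `E`: there is no proper two-sided
ideal `I` of `E` such that `x` is a unity modulo `I`. -/
def GRegularOn (E : AddSubgroup R) (x : R) : Prop :=
  ∀ I : AddSubgroup R, IsIdealOn E I → I ≠ E →
    ¬ (∀ a ∈ E, x * a - a ∈ I ∧ a * x - a ∈ I)

end Rings

namespace SGraded

variable {S : Type v} {R : Type w} [NonUnitalRing R] (G : SGraded S R)

/-- An additive subgroup generated (as an additive group) by its homogeneous elements. -/
def IsHomSubgroup (I : AddSubgroup R) : Prop :=
  I = AddSubgroup.closure {a : R | a ∈ I ∧ G.Homog a}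

/-- A homogeneous right ideal of `R`. -/
def IsHomRightIdeal (I : AddSubgroup R) : Prop := IsRightIdeal I ∧ G.IsHomSubgroup I

/-- A homogeneous (two-sided) ideal of `R`. -/
def IsHomIdeal (I : AddSubgroup R) : Prop := IsTwoSidedIdeal' I ∧ G.IsHomSubgroup I

/-- `Ǐ`: the largest homogeneous ideal of `R` contained in `I`. -/
def core (I : AddSubgroup R) : AddSubgroup R :=
  sSup {J : AddSubgroup R | G.IsHomIdeal J ∧ J ≤ I}

/-- A homogeneous right ideal, maximal among the proper homogeneous right ideals of `R`. -/
def IsMaxHomRightIdeal (I : AddSubgroup R) : Prop :=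
  G.IsHomRightIdeal I ∧ I ≠ ⊤ ∧ ∀ K : AddSubgroup R, G.IsHomRightIdeal K → I < K → K = ⊤

/-- A modular homogeneous ideal of `R`: a homogeneous ideal admitting a homogeneous
unity modulo it. -/
def IsModularHomIdeal (I : AddSubgroup R) : Prop :=
  G.IsHomIdeal I ∧ ∃ e, G.Homog e ∧ IsUnityMod e I

/-- A homogeneous element is G-regular if it is a unity modulo no proper homogeneous
ideal of `R`. -/
def GRegular (x : R) : Prop :=
  ∀ I : AddSubgroup R, G.IsHomIdeal I → I ≠ ⊤ → ¬ IsUnityMod x I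

/-- The quotient graded ring `R/J` (graded by the images of the components) is a
regular simple graded ring whose identity is the image of a homogeneous element:
`R/J` is nonzero, regular, has an identity which is the image of a homogeneous
element of `R`, and has no homogeneous ideals other than `0` and `R/J`. -/
def QuotInM (J : AddSubgroup R) : Prop :=
  J ≠ ⊤ ∧
  (∃ e, G.Homog e ∧ IsUnityMod e J) ∧
  (∀ K : AddSubgroup R, G.IsHomIdeal K → J ≤ K → K = J ∨ K = ⊤) ∧
  (∀ a b c : R, G.Homog a → G.Homog b → G.Homog c → a ∉ J → b ∉ J → c ∉ J →
    ((a * c ∉ J → b * c ∉ J → G.Addable (a * c) (b * c) → G.Addable a b) ∧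
     (c * a ∉ J → c * b ∉ J → G.Addable (c * a) (c * b) → G.Addable a b)))

/-- The graded Brown--McCoy radical `𝒢(R)`: the intersection of all homogeneous right
ideals `I`, maximal among the proper homogeneous right ideals, such that `R/Ǐ` is a
regular simple graded ring with identity the image of a homogeneous element. -/
def gradedBM : Set R :=
  {a : R | ∀ I : AddSubgroup R, G.IsMaxHomRightIdeal I → G.QuotInM (G.core I) → a ∈ I}

/-- The quotient right `R`-module `R/J` (graded by the images of the components) is a
graded-simple graded right `R`-module, phrased inside `R`. -/
def QuotGradedSimple (J : AddSubgroup R) : Prop :=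
  (∃ x a : R, G.Homog x ∧ G.Homog a ∧ x * a ∉ J) ∧
  (∀ K : AddSubgroup R, G.IsHomRightIdeal K → J ≤ K → K = J ∨ K = ⊤) ∧
  (∀ I : AddSubgroup R, G.IsHomIdeal I → (∃ r : R, ∃ b ∈ I, r * b ∉ J) →
    ∃ b ∈ I, ∀ x : R, G.Homog x → x * b - x ∈ J)

end SGraded

/-- A graded right module over an `S`-graded ring `R`: a right `R`-module structure on
an additive commutative group `M` together with a family of additive subgroups indexed
by a nonempty set `D` whose internal direct sum is `M` and with `M_d · R_s ⊆ M_t`. -/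
structure GradedRightModule {S : Type v} {R : Type w} [NonUnitalRing R]
    (G : SGraded S R) (M : Type u) [AddCommGroup M] where
  smul : M → R → M
  add_smul : ∀ (x y : M) (a : R), smul (x + y) a = smul x a + smul y a
  smul_add : ∀ (x : M) (a b : R), smul x (a + b) = smul x a + smul x b
  smul_mul : ∀ (x : M) (a b : R), smul x (a * b) = smul (smul x a) b
  D : Type u
  nonemptyD : Nonempty D
  mcomp : D → AddSubgroup M
  mindependent : iSupIndep mcomp
  miSup_eq_top : (⨆ d, mcomp d) = ⊤
  graded : ∀ (d : D) (s : S), ∃ t : D, ∀ x ∈ mcomp d, ∀ r ∈ G.component s, smul x r ∈ mcomp t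

namespace GradedRightModule

variable {S : Type v} {R : Type w} [NonUnitalRing R] {G : SGraded S R}
  {M : Type u} [AddCommGroup M] (gm : GradedRightModule G M)

/-- A homogeneous element of `M`. -/
def HomogM (x : M) : Prop := ∃ d, x ∈ gm.mcomp d

/-- Addability of homogeneous elements of `M`. -/
def AddableM (x y : M) : Prop := x = 0 ∨ y = 0 ∨ ∃ d, x ∈ gm.mcomp d ∧ y ∈ gm.mcomp d

/-- A homogeneous submodule of `M`: a submodule generated (as an additive group)
by its homogeneous elements. -/
def IsHomSubmodule (N : AddSubgroup M) : Prop :=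
  (∀ x ∈ N, ∀ r : R, gm.smul x r ∈ N) ∧
  N = AddSubgroup.closure {x : M | x ∈ N ∧ gm.HomogM x}

/-- `M` is graded-irreducible. -/
def GradedIrreducible : Prop :=
  (∃ (x : M) (a : R), gm.HomogM x ∧ G.Homog a ∧ gm.smul x a ≠ 0) ∧
  ∀ N : AddSubgroup M, gm.IsHomSubmodule N → N = ⊥ ∨ N = ⊤

/-- `M` is graded-simple: graded-irreducible and for every homogeneous ideal `I` of `R`
with `M·I ≠ 0` there is `b ∈ I` acting as identity on all homogeneous elements of `M`. -/
def GradedSimple : Prop :=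
  gm.GradedIrreducible ∧
  ∀ I : AddSubgroup R, G.IsHomIdeal I → (∃ x : M, ∃ b ∈ I, gm.smul x b ≠ 0) →
    ∃ b ∈ I, ∀ x : M, gm.HomogM x → gm.smul x b = x

/-- `M` is a regular graded module. -/
def ModRegular : Prop :=
  ∀ (x : M) (a b : R), gm.HomogM x → G.Homog a → G.Homog b →
    gm.smul x a ≠ 0 → gm.smul x b ≠ 0 →
    gm.AddableM (gm.smul x a) (gm.smul x b) → G.Addable a b

end GradedRightModule

/-- The large graded Brown--McCoy radical `G_l(R)`: the homogeneous elements
annihilating every graded-simple graded right `R`-module. -/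
def largeGradedBM {S : Type v} {R : Type w} [NonUnitalRing R] (G : SGraded S R) : Set R :=
  {a : R | G.Homog a ∧ ∀ (M : Type u) [AddCommGroup M] (gm : GradedRightModule G M),
    gm.GradedSimple → ∀ x : M, gm.smul x a = 0}

section Helpers

variable {S : Type v} {R : Type w} [NonUnitalRing R]

/-- sSup of homogeneous subgroups is homogeneous. -/
theorem sSup_isHomSubgroup (G : SGraded S R) {T : Set (AddSubgroup R)}
    (h : ∀ J ∈ T, G.IsHomSubgroup J) : G.IsHomSubgroup (sSup T) := by
  refine le_antisymm (sSup_le fun J hJ => ?_) ((AddSubgroup.closure_le _).2 fun a ha => ha.1)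
  have := h J hJ
  rw [SGraded.IsHomSubgroup] at this
  rw [this]
  exact AddSubgroup.closure_mono fun a ha => ⟨le_sSup hJ ha.1, ha.2⟩

theorem sSup_isTwoSided {T : Set (AddSubgroup R)}
    (h : ∀ J ∈ T, IsTwoSidedIdeal' J) : IsTwoSidedIdeal' (sSup T) := by
  set K : AddSubgroup R :=
    { carrier := {x : R | x ∈ sSup T ∧ ∀ r : R, x * r ∈ sSup T ∧ r * x ∈ sSup T}
      zero_mem' := ⟨zero_mem _, fun r => by simp [zero_mem]⟩
      add_mem' := fun {a b} ha hb => ⟨add_mem ha.1 hb.1, fun r => by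
        rw [add_mul, mul_add]
        exact ⟨add_mem (ha.2 r).1 (hb.2 r).1, add_mem (ha.2 r).2 (hb.2 r).2⟩⟩
      neg_mem' := fun {a} ha => ⟨neg_mem ha.1, fun r => by
        rw [neg_mul, mul_neg]
        exact ⟨neg_mem (ha.2 r).1, neg_mem (ha.2 r).2⟩⟩ }
  have hle : sSup T ≤ K := sSup_le fun J hJ x hx =>
    ⟨le_sSup hJ hx, fun r => ⟨le_sSup hJ (h J hJ x hx r).1, le_sSup hJ (h J hJ x hx r).2⟩⟩
  exact fun x hx r => (hle hx).2 r

theorem sSup_isRightIdeal {T : Set (AddSubgroup R)}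
    (h : ∀ J ∈ T, IsRightIdeal J) : IsRightIdeal (sSup T) := by
  set K : AddSubgroup R :=
    { carrier := {x : R | x ∈ sSup T ∧ ∀ r : R, x * r ∈ sSup T}
      zero_mem' := ⟨zero_mem _, fun r => by simp [zero_mem]⟩
      add_mem' := fun {a b} ha hb => ⟨add_mem ha.1 hb.1, fun r => by
        rw [add_mul]; exact add_mem (ha.2 r) (hb.2 r)⟩
      neg_mem' := fun {a} ha => ⟨neg_mem ha.1, fun r => by
        rw [neg_mul]; exact neg_mem (ha.2 r)⟩ }
  have hle : sSup T ≤ K := sSup_le fun J hJ x hx =>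
    ⟨le_sSup hJ hx, fun r => le_sSup hJ (h J hJ x hx r)⟩
  exact fun x hx r => (hle hx).2 r

theorem core_isHomIdeal (G : SGraded S R) (I : AddSubgroup R) :
    G.IsHomIdeal (G.core I) :=
  ⟨sSup_isTwoSided fun J hJ => hJ.1.1, sSup_isHomSubgroup G fun J hJ => hJ.1.2⟩

theorem core_le (G : SGraded S R) (I : AddSubgroup R) : G.core I ≤ I :=
  sSup_le fun _ hJ => hJ.2


end Helpers

variable {S : Type v} {R : Type w} [NonUnitalRing R]

/-- For a regular `S`-graded ring satisfying condition (Δ),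
`𝒢(R) = R` iff every homogeneous element of `R` is G-regular. -/
theorem gradedBM_eq_univ_iff (G : SGraded S R) (hreg : G.Regular) (hdelta : G.CondDelta) :
    G.gradedBM = Set.univ ↔ ∀ x : R, G.Homog x → G.GRegular x := by
  constructor
  · -- gradedBM = univ → every homogeneous element is G-regular
    intro h x hx I hI hIne hUnity
    -- x is not in I (else I = ⊤)
    have hxI : x ∉ I := by
      intro hmem
      apply hIne
      rw [AddSubgroup.eq_top_iff']
      intro a
      have h1 : x * a ∈ I := (hI.1 x hmem a).1
      have h2 : x * a - a ∈ I := (hUnity a).1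
      have : x * a - (x * a - a) ∈ I := sub_mem h1 h2
      simpa using this
    -- Zorn 1: maximal homogeneous ideal M ⊇ I with x ∉ M
    set 𝒮 : Set (AddSubgroup R) := {J | G.IsHomIdeal J ∧ I ≤ J ∧ x ∉ J} with h𝒮
    obtain ⟨M, hIM, hM𝒮, hMmax⟩ : ∃ M, I ≤ M ∧ M ∈ 𝒮 ∧ ∀ ⦃K⦄, K ∈ 𝒮 → M ≤ K → K ≤ M := by
      obtain ⟨M, hIM, hMm⟩ := zorn_le_nonempty₀ 𝒮 (fun c hc hchain y hy => by
        refine ⟨sSup c, ⟨⟨sSup_isTwoSided fun J hJ => (hc hJ).1.1,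
          sSup_isHomSubgroup G fun J hJ => (hc hJ).1.2⟩,
          le_trans (hc hy).2.1 (le_sSup hy), ?_⟩, fun z hz => le_sSup hz⟩
        intro hxs
        rw [AddSubgroup.mem_sSup_of_directedOn ⟨y, hy⟩ hchain.directedOn] at hxs
        obtain ⟨J, hJ, hxJ⟩ := hxs
        exact (hc hJ).2.2 hxJ) I ⟨hI, le_rfl, hxI⟩
      exact ⟨M, hIM, hMm.1, fun K hK hMK => hMm.2 hK hMK⟩
    obtain ⟨hMhom, hIM', hxM⟩ := hM𝒮
    -- x is a unity modulo M
    have hUM : IsUnityMod x M := fun a => ⟨hIM' (hUnity a).1, hIM' (hUnity a).2⟩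
    -- simplicity of M among homogeneous ideals
    have hsimple : ∀ K : AddSubgroup R, G.IsHomIdeal K → M ≤ K → K = M ∨ K = ⊤ := by
      intro K hK hMK
      by_cases hxK : x ∈ K
      · right
        rw [AddSubgroup.eq_top_iff']
        intro a
        have h1 : x * a ∈ K := (hK.1 x hxK a).1
        have h2 : x * a - a ∈ K := hMK (hUM a).1
        have : x * a - (x * a - a) ∈ K := sub_mem h1 h2
        simpa using this
      · exact Or.inl (le_antisymm (hMmax ⟨hK, le_trans hIM' hMK, hxK⟩ hMK) hMK)
    -- Zorn 2: maximal homogeneous right ideal Imax ⊇ M with x ∉ Imax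
    set 𝒯 : Set (AddSubgroup R) := {J | G.IsHomRightIdeal J ∧ M ≤ J ∧ x ∉ J} with h𝒯
    obtain ⟨N, hMN, hN𝒯, hNmax⟩ : ∃ N, M ≤ N ∧ N ∈ 𝒯 ∧ ∀ ⦃K⦄, K ∈ 𝒯 → N ≤ K → K ≤ N := by
      obtain ⟨N, hMN, hNm⟩ := zorn_le_nonempty₀ 𝒯 (fun c hc hchain y hy => by
        refine ⟨sSup c, ⟨⟨sSup_isRightIdeal fun J hJ => (hc hJ).1.1,
          sSup_isHomSubgroup G fun J hJ => (hc hJ).1.2⟩,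
          le_trans (hc hy).2.1 (le_sSup hy), ?_⟩, fun z hz => le_sSup hz⟩
        intro hxs
        rw [AddSubgroup.mem_sSup_of_directedOn ⟨y, hy⟩ hchain.directedOn] at hxs
        obtain ⟨J, hJ, hxJ⟩ := hxs
        exact (hc hJ).2.2 hxJ) M
        ⟨⟨fun a ha r => (hMhom.1 a ha r).1, hMhom.2⟩, le_rfl, hxM⟩
      exact ⟨N, hMN, hNm.1, fun K hK hNK => hNm.2 hK hNK⟩
    obtain ⟨hNhri, hMN', hxN⟩ := hN𝒯
    -- N is a maximal homogeneous right ideal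
    have hNmaxhri : G.IsMaxHomRightIdeal N := by
      refine ⟨hNhri, fun ht => hxN (ht ▸ AddSubgroup.mem_top x), fun K hK hNK => ?_⟩
      have hxK : x ∈ K := by
        by_contra hxK
        exact absurd (le_antisymm (hNmax ⟨hK, le_trans hMN' hNK.le, hxK⟩ hNK.le) hNK.le)
          hNK.ne'
      rw [AddSubgroup.eq_top_iff']
      intro a
      have h1 : x * a ∈ K := hK.1 x hxK a
      have h2 : x * a - a ∈ K := hNK.le (hMN' (hUM a).1)
      have : x * a - (x * a - a) ∈ K := sub_mem h1 h2
      simpa using this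
    -- core N = M
    have hcore : G.core N = M := by
      have h1 : M ≤ G.core N := le_sSup ⟨hMhom, hMN'⟩
      have h2 : G.core N ≤ N := core_le G N
      have hxc : x ∉ G.core N := fun hmem => hxN (h2 hmem)
      exact le_antisymm (hMmax ⟨core_isHomIdeal G N, le_trans hIM' h1, hxc⟩ h1) h1
    -- QuotInM (core N)
    have hQ : G.QuotInM (G.core N) := by
      rw [hcore]
      refine ⟨fun ht => hxM (ht ▸ AddSubgroup.mem_top x), ⟨x, hx, hUM⟩,
        fun K hK hMK => hsimple K hK hMK, ?_⟩
      intro a b c ha hb hc haM hbM hcM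
      have ha0 : a ≠ 0 := fun h0 => haM (h0 ▸ zero_mem M)
      have hb0 : b ≠ 0 := fun h0 => hbM (h0 ▸ zero_mem M)
      have hc0 : c ≠ 0 := fun h0 => hcM (h0 ▸ zero_mem M)
      have hr := hreg a b c ha hb hc ha0 hb0 hc0
      constructor
      · intro h1 h2 h3
        exact hr.1 (fun h0 => h1 (h0 ▸ zero_mem M)) (fun h0 => h2 (h0 ▸ zero_mem M)) h3
      · intro h1 h2 h3
        exact hr.2 (fun h0 => h1 (h0 ▸ zero_mem M)) (fun h0 => h2 (h0 ▸ zero_mem M)) h3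
    -- contradiction with gradedBM = univ
    have : N = ⊤ := by
      rw [AddSubgroup.eq_top_iff']
      intro a
      have ha : a ∈ G.gradedBM := h ▸ Set.mem_univ a
      exact ha N hNmaxhri hQ
    exact hxN (this ▸ AddSubgroup.mem_top x)
  · -- every homogeneous element G-regular → gradedBM = univ
    intro h
    rw [Set.eq_univ_iff_forall]
    intro a I hImax hQ
    exfalso
    obtain ⟨hne, ⟨e, he, hUe⟩, _, _⟩ := hQ
    exact h e he (G.core I) (core_isHomIdeal G I) hne hUe
end

section
/- Let R be a regular S-graded ring such that S satisfies condition (Δ), and let x be a nonzero homogeneous element of R. Then x is G-regular if and only if one of the following two conditions holds: (i) δ(x) is not an idempotent element of S; (ii) ε = δ(x) is an idempotent element of S and x is a G-regular element of the ring R_ε. -/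
/-!
Common framework: S-graded rings (rings that are direct sums of additive
subgroups indexed by a set S, with homogeneous products homogeneous),
homogeneous ideals, graded modules, and the various Brown--McCoy radicals.
-/

universe u v w

variable {S : Type v} {R : Type w} [NonUnitalRing R]

namespace SGraded

variable (G : SGraded S R)

/-- A nonzero element lies in at most one component. -/
lemma degree_unique {a : R} {s t : S} (ha : a ≠ 0)
    (hs : a ∈ G.component s) (ht : a ∈ G.component t) : s = t := by
  by_contra hne
  have hdisj := G.independent s
  have hle : G.component t ≤ ⨆ j, ⨆ (_ : j ≠ s), G.component j :=
    le_iSup₂ (f := fun j (_ : j ≠ s) => G.component j) t (Ne.symm hne)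
  have hbot : a ∈ (⊥ : AddSubgroup R) :=
    hdisj.le_bot (AddSubgroup.mem_inf.mpr ⟨hs, hle ht⟩)
  exact ha (by simpa using hbot)

/-- Common right factor trick. -/
lemma trickR {t : S} {a p c q : R} (hc : c ∈ G.component t) (hq : q ∈ G.component t)
    (hac : a * c ≠ 0) (hpq : p * q ≠ 0) :
    ∃ d ∈ G.component t, a * d ≠ 0 ∧ p * d ≠ 0 := by
  by_cases h1 : p * c = 0
  · by_cases h2 : a * q = 0
    · refine ⟨c + q, add_mem hc hq, ?_, ?_⟩
      · rw [mul_add, h2, add_zero]; exact hac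
      · rw [mul_add, h1, zero_add]; exact hpq
    · exact ⟨q, hq, h2, hpq⟩
  · exact ⟨c, hc, hac, h1⟩

/-- Common left factor trick. -/
lemma trickL {t : S} {a p c q : R} (hc : c ∈ G.component t) (hq : q ∈ G.component t)
    (hca : c * a ≠ 0) (hqp : q * p ≠ 0) :
    ∃ d ∈ G.component t, d * a ≠ 0 ∧ d * p ≠ 0 := by
  by_cases h1 : c * p = 0
  · by_cases h2 : q * a = 0
    · refine ⟨c + q, add_mem hc hq, ?_, ?_⟩
      · rw [add_mul, h2, add_zero]; exact hca
      · rw [add_mul, h1, zero_add]; exact hqp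
    · exact ⟨q, hq, h2, hqp⟩
  · exact ⟨c, hc, hca, h1⟩

/-- If `ε` is idempotent and a left multiple by an element of `R_ε` lands (nonzero) in
`R_ε`, then the right factor is itself in `R_ε`. -/
lemma absorbL (hreg : G.Regular) {ε : S} (hid : G.IsIdem ε)
    {c a : R} (hc : c ∈ G.component ε) (ha : G.Homog a)
    (hca : c * a ≠ 0) (hmem : c * a ∈ G.component ε) : a ∈ G.component ε := by
  obtain ⟨⟨c0, hc0, d0, hd0, h00⟩, hcl⟩ := hid
  obtain ⟨w, haw⟩ := ha
  have ha0 : a ≠ 0 := by rintro rfl; rw [mul_zero] at hca; exact hca rfl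
  obtain ⟨u, hu⟩ := G.mul_cond ε w ⟨c, hc, a, haw, hca⟩
  have huε : u = ε := G.degree_unique hca (hu c hc a haw) hmem
  subst huε
  obtain ⟨d, hd, hda, hdd0⟩ := G.trickL hc hc0 hca h00
  have hd0' : d0 ≠ 0 := by rintro rfl; rw [mul_zero] at h00; exact h00 rfl
  have hdne : d ≠ 0 := by rintro rfl; rw [zero_mul] at hda; exact hda rfl
  have hadd := (hreg a d0 d ⟨w, haw⟩ ⟨u, hd0⟩ ⟨u, hd⟩ ha0 hd0' hdne).2 hda hdd0
    (Or.inr (Or.inr ⟨u, hu d hd a haw, hcl d hd d0 hd0⟩))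
  rcases hadd with h | h | ⟨w', h1, h2⟩
  · exact absurd h ha0
  · exact absurd h hd0'
  · have hw' : w' = u := G.degree_unique hd0' h2 hd0
    subst hw'; exact h1

/-- Mirror of `absorbL`. -/
lemma absorbR (hreg : G.Regular) {ε : S} (hid : G.IsIdem ε)
    {c a : R} (hc : c ∈ G.component ε) (ha : G.Homog a)
    (hac : a * c ≠ 0) (hmem : a * c ∈ G.component ε) : a ∈ G.component ε := by
  obtain ⟨⟨c0, hc0, d0, hd0, h00⟩, hcl⟩ := hid
  obtain ⟨w, haw⟩ := ha
  have ha0 : a ≠ 0 := by rintro rfl; rw [zero_mul] at hac; exact hac rfl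
  obtain ⟨u, hu⟩ := G.mul_cond w ε ⟨a, haw, c, hc, hac⟩
  have huε : u = ε := G.degree_unique hac (hu a haw c hc) hmem
  subst huε
  obtain ⟨d, hd, had, hc0d⟩ := G.trickR hc hd0 hac h00
  have hc0' : c0 ≠ 0 := by rintro rfl; rw [zero_mul] at h00; exact h00 rfl
  have hdne : d ≠ 0 := by rintro rfl; rw [mul_zero] at had; exact had rfl
  have hadd := (hreg a c0 d ⟨w, haw⟩ ⟨u, hc0⟩ ⟨u, hd⟩ ha0 hc0' hdne).1 had hc0d
    (Or.inr (Or.inr ⟨u, hu a haw d hd, hcl c0 hc0 d hd⟩))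
  rcases hadd with h | h | ⟨w', h1, h2⟩
  · exact absurd h ha0
  · exact absurd h hc0'
  · have hw' : w' = u := G.degree_unique hc0' h2 hc0
    subst hw'; exact h1

/-- Key lemma: a nonzero homogeneous product landing in `R_ε` with at least one factor
outside `R_ε` lies in every ideal `I` of `R_ε` modulo which `x` is a unity. -/
lemma bigLem (hreg : G.Regular) (hdelta : G.CondDelta) {ε : S} (hid : G.IsIdem ε)
    {x : R} (hx : x ∈ G.component ε) (hx0 : x ≠ 0)
    {I : AddSubgroup R} (hI : IsIdealOn (G.component ε) I)
    (hunit : ∀ a ∈ G.component ε, x * a - a ∈ I ∧ a * x - a ∈ I)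
    {a b : R} (ha : G.Homog a) (hb : G.Homog b) (hab : a * b ≠ 0)
    (habε : a * b ∈ G.component ε)
    (hout : a ∉ G.component ε ∨ b ∉ G.component ε) : a * b ∈ I := by
  have ha0 : a ≠ 0 := by rintro rfl; rw [zero_mul] at hab; exact hab rfl
  have hb0 : b ≠ 0 := by rintro rfl; rw [mul_zero] at hab; exact hab rfl
  have haε : a ∉ G.component ε := by
    intro hain
    have hbin : b ∈ G.component ε := G.absorbL hreg hid hain hb hab habε
    rcases hout with h | h
    · exact h hain
    · exact h hbin
  have hbε : b ∉ G.component ε := fun hbin =>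
    haε (G.absorbR hreg hid hbin ha hab habε)
  obtain ⟨σ, haσ⟩ := ha
  obtain ⟨τ, hbτ⟩ := hb
  have hσε : σ ≠ ε := fun h => haε (h ▸ haσ)
  have hτε : τ ≠ ε := fun h => hbε (h ▸ hbτ)
  obtain ⟨u, hu⟩ := G.mul_cond σ τ ⟨a, haσ, b, hbτ, hab⟩
  have huε : u = ε := G.degree_unique hab (hu a haσ b hbτ) habε
  subst huε
  have hIdem : G.IsIdem σ ∨ G.IsIdem τ := by
    by_contra h
    push_neg at h
    exact hdelta σ τ u ⟨a, haσ, b, hbτ, hab⟩ hu h.1 h.2 hid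
  rcases hIdem with hσ | hτ
  · -- show x * (a*b) = 0, then a*b ∈ I by modularity
    obtain ⟨⟨p, hp, q, hq, hpq⟩, hσcl⟩ := hσ
    have hzero : x * (a * b) = 0 := by
      by_contra hne
      have hxa : x * a ≠ 0 := fun h => hne (by rw [← mul_assoc, h, zero_mul])
      obtain ⟨ρ, hρ⟩ := G.mul_cond u σ ⟨x, hx, a, haσ, hxa⟩
      have h1 : (x * a) * b ≠ 0 := by rwa [mul_assoc]
      have hmemε : (x * a) * b ∈ G.component u := by
        rw [mul_assoc]; exact hid.2 x hx _ habε
      have hadd := (hreg (x * a) a b ⟨ρ, hρ x hx a haσ⟩ ⟨σ, haσ⟩ ⟨τ, hbτ⟩ hxa ha0 hb0).1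
        h1 hab (Or.inr (Or.inr ⟨u, hmemε, habε⟩))
      have hxaσ : x * a ∈ G.component σ := by
        rcases hadd with h | h | ⟨w', h1', h2'⟩
        · exact absurd h hxa
        · exact absurd h ha0
        · have : w' = σ := G.degree_unique ha0 h2' haσ
          exact this ▸ h1'
      have hρσ : ρ = σ := G.degree_unique hxa (hρ x hx a haσ) hxaσ
      subst hρσ
      obtain ⟨d, hd, hxd, hpd⟩ := G.trickR haσ hq hxa hpq
      have hp0 : p ≠ 0 := fun h => hpq (by rw [h, zero_mul])
      have hd0 : d ≠ 0 := fun h => hxd (by rw [h, mul_zero])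
      have hadd2 := (hreg x p d ⟨u, hx⟩ ⟨ρ, hp⟩ ⟨ρ, hd⟩ hx0 hp0 hd0).1 hxd hpd
        (Or.inr (Or.inr ⟨ρ, hρ x hx d hd, hσcl p hp d hd⟩))
      rcases hadd2 with h | h | ⟨w', h1', h2'⟩
      · exact absurd h hx0
      · exact absurd h hp0
      · have hw' : w' = u := G.degree_unique hx0 h1' hx
        subst hw'
        exact hσε (G.degree_unique hp0 hp h2')
    have hmI := (hunit (a * b) habε).1
    rw [hzero, zero_sub] at hmI
    exact (neg_mem_iff).mp hmI
  · -- show (a*b) * x = 0, then a*b ∈ I by modularity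
    obtain ⟨⟨p, hp, q, hq, hpq⟩, hτcl⟩ := hτ
    have hzero : (a * b) * x = 0 := by
      by_contra hne
      have hbx : b * x ≠ 0 := fun h => hne (by rw [mul_assoc, h, mul_zero])
      obtain ⟨ρ, hρ⟩ := G.mul_cond τ u ⟨b, hbτ, x, hx, hbx⟩
      have h1 : a * (b * x) ≠ 0 := by rwa [← mul_assoc]
      have hmemε : a * (b * x) ∈ G.component u := by
        rw [← mul_assoc]; exact hid.2 _ habε x hx
      have hadd := (hreg b (b * x) a ⟨τ, hbτ⟩ ⟨ρ, hρ b hbτ x hx⟩ ⟨σ, haσ⟩ hb0 hbx ha0).2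
        hab h1 (Or.inr (Or.inr ⟨u, habε, hmemε⟩))
      have hbxτ : b * x ∈ G.component τ := by
        rcases hadd with h | h | ⟨w', h1', h2'⟩
        · exact absurd h hb0
        · exact absurd h hbx
        · have : w' = τ := G.degree_unique hb0 h1' hbτ
          exact this ▸ h2'
      have hρτ : ρ = τ := G.degree_unique hbx (hρ b hbτ x hx) hbxτ
      subst hρτ
      obtain ⟨d, hd, hdx, hdq⟩ := G.trickL hbτ hp hbx hpq
      have hq0 : q ≠ 0 := fun h => hpq (by rw [h, mul_zero])
      have hd0 : d ≠ 0 := fun h => hdx (by rw [h, zero_mul])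
      have hadd2 := (hreg x q d ⟨u, hx⟩ ⟨ρ, hq⟩ ⟨ρ, hd⟩ hx0 hq0 hd0).2 hdx hdq
        (Or.inr (Or.inr ⟨ρ, hρ d hd x hx, hτcl d hd q hq⟩))
      rcases hadd2 with h | h | ⟨w', h1', h2'⟩
      · exact absurd h hx0
      · exact absurd h hq0
      · have hw' : w' = u := G.degree_unique hx0 h1' hx
        subst hw'
        exact hτε (G.degree_unique hq0 hq h2')
    have hmI := (hunit (a * b) habε).2
    rw [hzero, zero_sub] at hmI
    exact (neg_mem_iff).mp hmI

/-- The whole ring splits as `R_ε ⊔ (⨆_{j ≠ ε} R_j)`. -/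
lemma comp_sup_rest (ε : S) :
    G.component ε ⊔ (⨆ j, ⨆ (_ : j ≠ ε), G.component j) = ⊤ := by
  rw [← G.iSup_eq_top]
  apply le_antisymm
  · exact sup_le (le_iSup _ ε) (iSup_le fun j => iSup_le fun _ => le_iSup _ j)
  · refine iSup_le fun w => ?_
    by_cases hw : w = ε
    · subst hw; exact le_sup_left
    · exact le_trans (le_iSup₂ (f := fun j (_ : j ≠ ε) => G.component j) w hw) le_sup_right

/-- Existence of the `(ε, rest)` decomposition. -/
lemma decompE (ε : S) (y : R) :
    ∃ a1 ∈ G.component ε, ∃ a2 ∈ (⨆ j, ⨆ (_ : j ≠ ε), G.component j), y = a1 + a2 := by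
  have hy : y ∈ G.component ε ⊔ (⨆ j, ⨆ (_ : j ≠ ε), G.component j) := by
    rw [G.comp_sup_rest ε]; exact AddSubgroup.mem_top y
  obtain ⟨a1, h1, a2, h2, hsum⟩ := AddSubgroup.mem_sup.mp hy
  exact ⟨a1, h1, a2, h2, hsum.symm⟩

/-- Uniqueness of the `(ε, rest)` decomposition. -/
lemma decompU (ε : S) {a1 a2 b1 b2 : R}
    (ha1 : a1 ∈ G.component ε) (hb1 : b1 ∈ G.component ε)
    (ha2 : a2 ∈ (⨆ j, ⨆ (_ : j ≠ ε), G.component j))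
    (hb2 : b2 ∈ (⨆ j, ⨆ (_ : j ≠ ε), G.component j))
    (h : a1 + a2 = b1 + b2) : a1 = b1 := by
  have hsub : a1 - b1 = b2 - a2 := by
    rw [sub_eq_sub_iff_add_eq_add, h, add_comm]
  have hmem1 : a1 - b1 ∈ G.component ε := sub_mem ha1 hb1
  have hmem2 : a1 - b1 ∈ (⨆ j, ⨆ (_ : j ≠ ε), G.component j) := by
    rw [hsub]; exact sub_mem hb2 ha2
  have hbot : a1 - b1 ∈ (⊥ : AddSubgroup R) :=
    (G.independent ε).le_bot (AddSubgroup.mem_inf.mpr ⟨hmem1, hmem2⟩)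
  have : a1 - b1 = 0 := by simpa using hbot
  exact sub_eq_zero.mp this

/-- The subgroup of elements whose `ε`-component lies in `Ih`. -/
def projGroup (ε : S) (Ih : AddSubgroup R) : AddSubgroup R where
  carrier := {y : R | ∀ a1 ∈ G.component ε,
    ∀ a2 ∈ (⨆ j, ⨆ (_ : j ≠ ε), G.component j), y = a1 + a2 → a1 ∈ Ih}
  zero_mem' := by
    intro a1 h1 a2 h2 heq
    have ha1 : a1 = 0 :=
      (G.decompU ε h1 (zero_mem _) h2 (zero_mem _) (by simpa using heq.symm))
    rw [ha1]; exact zero_mem Ih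
  add_mem' := by
    intro y y' hy hy' a1 h1 a2 h2 heq
    obtain ⟨c1, hc1, c2, hc2, hyd⟩ := G.decompE ε y
    obtain ⟨d1, hd1, d2, hd2, hyd'⟩ := G.decompE ε y'
    have h3 : (c1 + d1) + (c2 + d2) = a1 + a2 := by
      rw [← heq, hyd, hyd']; abel
    have := G.decompU ε (add_mem hc1 hd1) h1 (add_mem hc2 hd2) h2 h3
    rw [← this]
    exact add_mem (hy c1 hc1 c2 hc2 hyd) (hy' d1 hd1 d2 hd2 hyd')
  neg_mem' := by
    intro y hy a1 h1 a2 h2 heq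
    obtain ⟨c1, hc1, c2, hc2, hyd⟩ := G.decompE ε y
    have h3 : (-c1) + (-c2) = a1 + a2 := by rw [← heq, hyd]; abel
    have := G.decompU ε (neg_mem hc1) h1 (neg_mem hc2) h2 h3
    rw [← this]
    exact neg_mem (hy c1 hc1 c2 hc2 hyd)

/-- Homogeneous-component extraction from a homogeneous subgroup. -/
lemma hom_proj {ε : S} {Ih : AddSubgroup R} (hIh : G.IsHomSubgroup Ih)
    {b1 b2 : R} (h1 : b1 ∈ G.component ε)
    (h2 : b2 ∈ (⨆ j, ⨆ (_ : j ≠ ε), G.component j))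
    (hmem : b1 + b2 ∈ Ih) : b1 ∈ Ih := by
  have hle : Ih ≤ G.projGroup ε Ih := by
    refine le_trans (le_of_eq hIh) ((AddSubgroup.closure_le _).mpr ?_)
    rintro h0 ⟨hh0, w, hw⟩
    intro a1 ha1 a2 ha2 heq
    by_cases hc : h0 ∈ G.component ε
    · have : h0 = a1 :=
        G.decompU ε hc ha1 (zero_mem _) ha2 (by rw [add_zero]; exact heq)
      exact this ▸ hh0
    · have hwε : w ≠ ε := fun h => hc (h ▸ hw)
      have hh0C : h0 ∈ (⨆ j, ⨆ (_ : j ≠ ε), G.component j) :=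
        le_iSup₂ (f := fun j (_ : j ≠ ε) => G.component j) w hwε hw
      have : (0 : R) = a1 :=
        G.decompU ε (zero_mem _) ha1 hh0C ha2 (by rw [zero_add]; exact heq)
      exact this ▸ zero_mem Ih
  exact hle hmem b1 h1 b2 h2 rfl

/-- If an ideal contains an element that is a unity modulo it, the ideal is everything. -/
lemma top_of_unity_mem {Ih : AddSubgroup R} (hIh : IsTwoSidedIdeal' Ih) {x : R}
    (hunity : IsUnityMod x Ih) (hx : x ∈ Ih) : Ih = ⊤ := by
  rw [eq_top_iff]
  intro a _
  have h1 := (hIh x hx a).1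
  have h2 := (hunity a).1
  have := Ih.sub_mem h1 h2
  simpa using this

/-- The subgroup of elements multiplying `J` into itself from both sides. -/
def allMul (J : AddSubgroup R) : AddSubgroup R where
  carrier := {y : R | ∀ r : R, y * r ∈ J ∧ r * y ∈ J}
  zero_mem' := fun r => ⟨by rw [zero_mul]; exact zero_mem J, by rw [mul_zero]; exact zero_mem J⟩
  add_mem' := by
    intro a b ha hb r
    exact ⟨by rw [add_mul]; exact add_mem (ha r).1 (hb r).1,
      by rw [mul_add]; exact add_mem (ha r).2 (hb r).2⟩
  neg_mem' := by
    intro a ha r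
    exact ⟨by rw [neg_mul]; exact neg_mem (ha r).1,
      by rw [mul_neg]; exact neg_mem (ha r).2⟩

/-- The subgroup of elements `r` with `y*r, r*y ∈ J`. -/
def mulInto (y : R) (J : AddSubgroup R) : AddSubgroup R where
  carrier := {r : R | y * r ∈ J ∧ r * y ∈ J}
  zero_mem' := ⟨by rw [mul_zero]; exact zero_mem J, by rw [zero_mul]; exact zero_mem J⟩
  add_mem' := by
    intro a b ha hb
    exact ⟨by rw [mul_add]; exact add_mem ha.1 hb.1,
      by rw [add_mul]; exact add_mem ha.2 hb.2⟩
  neg_mem' := by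
    intro a ha
    exact ⟨by rw [mul_neg]; exact neg_mem ha.1,
      by rw [neg_mul]; exact neg_mem ha.2⟩

/-- The subgroup of elements for which `x` acts as a unity modulo `J`. -/
def unityGrp (x : R) (J : AddSubgroup R) : AddSubgroup R where
  carrier := {a : R | x * a - a ∈ J ∧ a * x - a ∈ J}
  zero_mem' := ⟨by rw [mul_zero, sub_zero]; exact zero_mem J,
    by rw [zero_mul, sub_zero]; exact zero_mem J⟩
  add_mem' := by
    intro a b ha hb
    constructor
    · have := add_mem ha.1 hb.1
      have heq : x * (a + b) - (a + b) = (x * a - a) + (x * b - b) := by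
        rw [mul_add]; abel
      rw [heq]; exact this
    · have := add_mem ha.2 hb.2
      have heq : (a + b) * x - (a + b) = (a * x - a) + (b * x - b) := by
        rw [add_mul]; abel
      rw [heq]; exact this
  neg_mem' := by
    intro a ha
    constructor
    · have := neg_mem ha.1
      have heq : x * (-a) - (-a) = -(x * a - a) := by rw [mul_neg]; abel
      rw [heq]; exact this
    · have := neg_mem ha.2
      have heq : (-a) * x - (-a) = -(a * x - a) := by rw [neg_mul]; abel
      rw [heq]; exact this

/-- Every element of `R` belongs to a subgroup containing all components. -/
lemma mem_of_comp_le {T : AddSubgroup R} (h : ∀ w, G.component w ≤ T) (a : R) : a ∈ T := by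
  have htop : (⊤ : AddSubgroup R) ≤ T := by
    rw [← G.iSup_eq_top]; exact iSup_le h
  exact htop (AddSubgroup.mem_top a)

end SGraded

/-- For a regular `S`-graded ring satisfying condition (Δ) and a
nonzero homogeneous `x`, `x` is G-regular iff either the degree of `x` is not
idempotent, or it is some idempotent `ε` and `x` is G-regular in the ring `R_ε`. -/
theorem gRegular_iff (G : SGraded S R) (hreg : G.Regular) (hdelta : G.CondDelta)
    (x : R) (hx : G.Homog x) (hx0 : x ≠ 0) :
    G.GRegular x ↔
      ((∀ ε : S, x ∈ G.component ε → ¬ G.IsIdem ε) ∨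
       (∃ ε : S, G.IsIdem ε ∧ x ∈ G.component ε ∧ GRegularOn (G.component ε) x)) := by
  obtain ⟨ε, hxε⟩ := hx
  constructor
  · -- forward direction
    intro hG
    by_cases hid : G.IsIdem ε
    · right
      refine ⟨ε, hid, hxε, ?_⟩
      intro I hI hne hunit
      set C : AddSubgroup R := ⨆ j, ⨆ (_ : j ≠ ε), G.component j with hC
      set J : AddSubgroup R := I ⊔ C with hJ
      have hcompC : ∀ w, w ≠ ε → G.component w ≤ C := fun w hw =>
        le_iSup₂ (f := fun j (_ : j ≠ ε) => G.component j) w hw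
      have hIJ : I ≤ J := le_sup_left
      have hCJ : C ≤ J := le_sup_right
      -- products of homogeneous elements stay in J
      have key : ∀ y r : R, G.Homog y → G.Homog r → (y ∈ I ∨ y ∉ G.component ε) →
          y * r ∈ J ∧ r * y ∈ J := by
        intro y r hyh hrh hcase
        obtain ⟨s, hys⟩ := hyh
        obtain ⟨t, hrt⟩ := hrh
        constructor
        · by_cases h0 : y * r = 0
          · exact h0 ▸ J.zero_mem
          · obtain ⟨u, hu⟩ := G.mul_cond s t ⟨y, hys, r, hrt, h0⟩
            by_cases hε : y * r ∈ G.component ε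
            · rcases hcase with hyI | hyn
              · have hyε : y ∈ G.component ε := hI.1 hyI
                have hrε : r ∈ G.component ε :=
                  G.absorbL hreg hid hyε ⟨t, hrt⟩ h0 hε
                exact hIJ ((hI.2 y hyI r hrε).1)
              · exact hIJ (G.bigLem hreg hdelta hid hxε hx0 hI hunit
                  ⟨s, hys⟩ ⟨t, hrt⟩ h0 hε (Or.inl hyn))
            · have huε : u ≠ ε := fun h => hε (h ▸ hu y hys r hrt)
              exact hCJ (hcompC u huε (hu y hys r hrt))
        · by_cases h0 : r * y = 0
          · exact h0 ▸ J.zero_mem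
          · obtain ⟨u, hu⟩ := G.mul_cond t s ⟨r, hrt, y, hys, h0⟩
            by_cases hε : r * y ∈ G.component ε
            · rcases hcase with hyI | hyn
              · have hyε : y ∈ G.component ε := hI.1 hyI
                have hrε : r ∈ G.component ε :=
                  G.absorbR hreg hid hyε ⟨t, hrt⟩ h0 hε
                exact hIJ ((hI.2 y hyI r hrε).2)
              · exact hIJ (G.bigLem hreg hdelta hid hxε hx0 hI hunit
                  ⟨t, hrt⟩ ⟨s, hys⟩ h0 hε (Or.inr hyn))
            · have huε : u ≠ ε := fun h => hε (h ▸ hu r hrt y hys)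
              exact hCJ (hcompC u huε (hu r hrt y hys))
      -- J is a two-sided ideal
      have step1 : ∀ y : R, G.Homog y → (y ∈ I ∨ y ∉ G.component ε) →
          ∀ r : R, y * r ∈ J ∧ r * y ∈ J := by
        intro y hyh hcase r
        have hcomp : ∀ w, G.component w ≤ SGraded.mulInto y J := by
          intro w z hz
          exact key y z hyh ⟨w, hz⟩ hcase
        exact G.mem_of_comp_le hcomp r
      have hJK : J ≤ SGraded.allMul J := by
        refine sup_le ?_ ?_
        · intro y hy
          exact step1 y ⟨ε, hI.1 hy⟩ (Or.inl hy)
        · refine iSup_le fun w => iSup_le fun hw => ?_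
          intro y hy
          by_cases hy0 : y = 0
          · subst hy0
            exact (SGraded.allMul J).zero_mem
          · refine step1 y ⟨w, hy⟩ (Or.inr fun hyε => hy0 ?_)
            exact absurd (G.degree_unique hy0 hy hyε) hw
      have hJideal : IsTwoSidedIdeal' J := fun y hy r => hJK hy r
      -- J is homogeneous
      have hJhom : G.IsHomSubgroup J := by
        apply le_antisymm
        · refine sup_le ?_ ?_
          · intro i hi
            exact AddSubgroup.subset_closure ⟨hIJ hi, ⟨ε, hI.1 hi⟩⟩
          · refine iSup_le fun w => iSup_le fun hw => ?_
            intro y hy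
            exact AddSubgroup.subset_closure ⟨hCJ (hcompC w hw hy), ⟨w, hy⟩⟩
        · exact (AddSubgroup.closure_le J).mpr fun a ha => ha.1
      -- J is proper
      have hprop : J ≠ ⊤ := by
        obtain ⟨e, heE, heI⟩ : ∃ e ∈ G.component ε, e ∉ I := by
          by_contra h
          push_neg at h
          exact hne (le_antisymm hI.1 h)
        intro htop
        have heJ : e ∈ J := htop ▸ AddSubgroup.mem_top e
        obtain ⟨i, hiI, c, hcC, hsum⟩ := AddSubgroup.mem_sup.mp heJ
        have hcε : c ∈ G.component ε := by
          have hce : c = e - i := eq_sub_of_add_eq' hsum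
          rw [hce]
          exact sub_mem heE (hI.1 hiI)
        have hc0 : c = 0 := by
          have hbot : c ∈ (⊥ : AddSubgroup R) :=
            (G.independent ε).le_bot (AddSubgroup.mem_inf.mpr ⟨hcε, hcC⟩)
          simpa using hbot
        rw [hc0, add_zero] at hsum
        exact heI (hsum ▸ hiI)
      -- x is a unity modulo J
      have hunity : IsUnityMod x J := by
        intro a
        have hcomp : ∀ w, G.component w ≤ SGraded.unityGrp x J := by
          intro w z hz
          by_cases hzε : z ∈ G.component ε
          · exact ⟨hIJ (hunit z hzε).1, hIJ (hunit z hzε).2⟩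
          · have hz0 : z ≠ 0 := fun h => hzε (h ▸ zero_mem _)
            have hwε : w ≠ ε := fun h => hzε (h ▸ hz)
            have hzC : z ∈ J := hCJ (hcompC w hwε hz)
            constructor
            · by_cases hxz : x * z = 0
              · rw [hxz, zero_sub]
                exact neg_mem hzC
              · obtain ⟨u, hu⟩ := G.mul_cond ε w ⟨x, hxε, z, hz, hxz⟩
                have hxzε : x * z ∉ G.component ε := fun h =>
                  hzε (G.absorbL hreg hid hxε ⟨w, hz⟩ hxz h)
                have huε : u ≠ ε := fun h => hxzε (h ▸ hu x hxε z hz)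
                exact sub_mem (hCJ (hcompC u huε (hu x hxε z hz))) hzC
            · by_cases hzx : z * x = 0
              · rw [hzx, zero_sub]
                exact neg_mem hzC
              · obtain ⟨u, hu⟩ := G.mul_cond w ε ⟨z, hz, x, hxε, hzx⟩
                have hzxε : z * x ∉ G.component ε := fun h =>
                  hzε (G.absorbR hreg hid hxε ⟨w, hz⟩ hzx h)
                have huε : u ≠ ε := fun h => hzxε (h ▸ hu z hz x hxε)
                exact sub_mem (hCJ (hcompC u huε (hu z hz x hxε))) hzC
        exact G.mem_of_comp_le hcomp a
      exact hG J ⟨hJideal, hJhom⟩ hprop hunity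
    · left
      intro ε' hxε'
      have hee : ε' = ε := G.degree_unique hx0 hxε' hxε
      exact hee ▸ hid
  · -- backward direction
    rintro (hni | ⟨ε', hid, hxε', hGon⟩)
    · intro Ih hIh hne hunity
      have hxIh : x ∈ Ih := by
        by_cases hxx : x * x = 0
        · have hm := (hunity x).1
          rw [hxx, zero_sub] at hm
          exact neg_mem_iff.mp hm
        · obtain ⟨u, hu⟩ := G.mul_cond ε ε ⟨x, hxε, x, hxε, hxx⟩
          have huε : u ≠ ε := by
            intro h
            subst h
            exact hni u hxε ⟨⟨x, hxε, x, hxε, hxx⟩, hu⟩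
          have hdecomp : x * x - x = (-x) + x * x := by abel
          have hmem : (-x) + x * x ∈ Ih := hdecomp ▸ (hunity x).1
          have hxxC : x * x ∈ (⨆ j, ⨆ (_ : j ≠ ε), G.component j) :=
            le_iSup₂ (f := fun j (_ : j ≠ ε) => G.component j) u huε (hu x hxε x hxε)
          have hnegx : -x ∈ Ih := G.hom_proj hIh.2 (neg_mem hxε) hxxC hmem
          exact neg_mem_iff.mp hnegx
      exact hne (SGraded.top_of_unity_mem hIh.1 hunity hxIh)
    · intro Ih hIh hne hunity
      have hIdeal : IsIdealOn (G.component ε') (Ih ⊓ G.component ε') := by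
        refine ⟨inf_le_right, ?_⟩
        intro z hz r hr
        obtain ⟨hz1, hz2⟩ := AddSubgroup.mem_inf.mp hz
        exact ⟨AddSubgroup.mem_inf.mpr ⟨(hIh.1 z hz1 r).1, hid.2 z hz2 r hr⟩,
          AddSubgroup.mem_inf.mpr ⟨(hIh.1 z hz1 r).2, hid.2 r hr z hz2⟩⟩
      have huOn : ∀ a ∈ G.component ε',
          x * a - a ∈ Ih ⊓ G.component ε' ∧ a * x - a ∈ Ih ⊓ G.component ε' := by
        intro a ha
        exact ⟨AddSubgroup.mem_inf.mpr ⟨(hunity a).1, sub_mem (hid.2 x hxε' a ha) ha⟩,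
          AddSubgroup.mem_inf.mpr ⟨(hunity a).2, sub_mem (hid.2 a ha x hxε') ha⟩⟩
      have hEq : Ih ⊓ G.component ε' = G.component ε' := by
        by_contra h
        exact hGon _ hIdeal h huOn
      have hxIh : x ∈ Ih := by
        have hle : G.component ε' ≤ Ih := by
          rw [← hEq]
          exact inf_le_left
        exact hle hxε'
      exact hne (SGraded.top_of_unity_mem hIh.1 hunity hxIh)
end

section
/- Let R be a regular S-graded ring and let ε ∈ S be an idempotent element. If I is a homogeneous right ideal of R, maximal among the proper homogeneous right ideals of R, such that Ǐ is a modular homogeneous ideal of R of degree ε, then I ∩ R_ε is a maximal right ideal of the ring R_ε, and the largest two-sided ideal of R_ε contained in I ∩ R_ε is a modular two-sided ideal of the ring R_ε (i.e., it admits an element e ∈ R_ε with ea − a and ae − a in it for all a ∈ R_ε). -/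
/-!
Common framework: S-graded rings (rings that are direct sums of additive
subgroups indexed by a set S, with homogeneous products homogeneous),
homogeneous ideals, graded modules, and the various Brown--McCoy radicals.
-/

universe u v w

variable {S : Type v} {R : Type w} [NonUnitalRing R]

/-- Let `R` be a regular `S`-graded ring, `ε ∈ S` idempotent and `I`
a homogeneous right ideal maximal among the proper homogeneous right ideals, with `Ǐ`
a modular homogeneous ideal of degree `ε`. Then `I ∩ R_ε` is a maximal right ideal of
the ring `R_ε` and the largest two-sided ideal of `R_ε` contained in `I ∩ R_ε` is a
modular two-sided ideal of `R_ε`. -/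
theorem maxHomRightIdeal_inter_component (G : SGraded S R) (hreg : G.Regular)
    (ε : S) (hε : G.IsIdem ε) (I : AddSubgroup R)
    (hI : G.IsMaxHomRightIdeal I) (hmod : G.IsModularHomIdeal (G.core I))
    (hdeg : ∃ e, e ≠ 0 ∧ e ∈ G.component ε ∧ IsUnityMod e (G.core I)) :
    IsMaxRightIdealOn (G.component ε) (I ⊓ G.component ε) ∧
    IsModularIdealOn (G.component ε) (coreOn (G.component ε) (I ⊓ G.component ε)) := by
  classical
  obtain ⟨e, he0, heE, heU⟩ := hdeg
  obtain ⟨⟨hIri, hIhom⟩, hIne, hImax⟩ := hI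
  have hεmul := hε.2
  have hcore_le : G.core I ≤ I := sSup_le fun J hJ => hJ.2
  have hcore_ideal : IsTwoSidedIdeal' (G.core I) := hmod.1.1
  -- the "non-ε" part N and disjointness
  set N : AddSubgroup R := ⨆ (j) (_ : j ≠ ε), G.component j with hN
  have hdisj : Disjoint (G.component ε) N := G.independent ε
  have hmemN : ∀ s, s ≠ ε → ∀ x ∈ G.component s, x ∈ N := fun s hs x hx =>
    (le_iSup₂ (f := fun j (_ : j ≠ ε) => G.component j) s hs) hx
  have huniq : ∀ s, ∀ x ∈ G.component s, x ∈ G.component ε → x ≠ 0 → s = ε := by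
    intro s x hxs hxe hx0
    by_contra hs
    exact hx0 (AddSubgroup.mem_bot.mp (hdisj.le_bot (AddSubgroup.mem_inf.mpr
      ⟨hxe, hmemN s hs x hxs⟩)))
  -- e ∉ I
  have heI : e ∉ I := by
    intro heI
    apply hIne
    rw [AddSubgroup.eq_top_iff']
    intro a
    have h1 : e * a ∈ I := hIri e heI a
    have h2 : e * a - a ∈ I := hcore_le (heU a).1
    exact (sub_sub_cancel (e * a) a) ▸ sub_mem h1 h2
  -- components of I lie in J ⊔ N
  have hIle : I ≤ (I ⊓ G.component ε) ⊔ N := by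
    refine le_trans (le_of_eq hIhom) ((AddSubgroup.closure_le _).mpr ?_)
    rintro x ⟨hxI, s, hxs⟩
    by_cases hs : s = ε
    · exact AddSubgroup.mem_sup_left (AddSubgroup.mem_inf.mpr ⟨hxI, hs ▸ hxs⟩)
    · exact AddSubgroup.mem_sup_right (hmemN s hs x hxs)
  constructor
  · refine ⟨⟨inf_le_right, fun x hx r hr => AddSubgroup.mem_inf.mpr
      ⟨hIri x (AddSubgroup.mem_inf.mp hx).1 r, hεmul x (AddSubgroup.mem_inf.mp hx).2 r hr⟩⟩,
      ?_, ?_⟩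
    · intro h
      have : e ∈ I ⊓ G.component ε := by rw [h]; exact heE
      exact heI (AddSubgroup.mem_inf.mp this).1
    · intro K hK hJK hKE
      obtain ⟨hJleK, x, hxK, hxJ⟩ := SetLike.lt_iff_le_and_exists.mp hJK
      have hxE : x ∈ G.component ε := hKE hxK
      have hxI : x ∉ I := fun h => hxJ (AddSubgroup.mem_inf.mpr ⟨h, hxE⟩)
      set W : AddSubgroup R := AddSubgroup.closure
        ((I : Set R) ∪ (K : Set R) ∪ {y | ∃ k ∈ K, ∃ r : R, y = k * r}) with hWdef
      have hIW : I ≤ W := fun y hy =>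
        AddSubgroup.subset_closure (Or.inl (Or.inl hy))
      have hKW : K ≤ W := fun y hy =>
        AddSubgroup.subset_closure (Or.inl (Or.inr hy))
      have hkrW : ∀ k ∈ K, ∀ r : R, k * r ∈ W := fun k hk r =>
        AddSubgroup.subset_closure (Or.inr ⟨k, hk, r, rfl⟩)
      -- W is a right ideal
      have hWri : IsRightIdeal W := by
        intro y hy r
        have hle : W ≤ W.comap (AddMonoidHom.mulRight r) := by
          rw [hWdef]
          refine (AddSubgroup.closure_le _).mpr ?_
          rintro z ((hz | hz) | ⟨k, hk, r', rfl⟩)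
          · exact AddSubgroup.mem_comap.mpr (hIW (hIri z hz r))
          · exact AddSubgroup.mem_comap.mpr (hkrW z hz r)
          · refine AddSubgroup.mem_comap.mpr ?_
            show k * r' * r ∈ W
            rw [mul_assoc]
            exact hkrW k hk (r' * r)
        exact AddSubgroup.mem_comap.mp (hle hy)
      -- W is homogeneous
      have hWhom : G.IsHomSubgroup W := by
        refine le_antisymm ?_ ((AddSubgroup.closure_le _).mpr fun a ha => ha.1)
        conv_lhs => rw [hWdef]
        refine (AddSubgroup.closure_le _).mpr ?_
        rintro z ((hz | hz) | ⟨k, hk, r', rfl⟩)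
        · refine (le_trans (le_of_eq hIhom) (AddSubgroup.closure_mono ?_)) hz
          intro a ha
          exact ⟨hIW ha.1, ha.2⟩
        · exact AddSubgroup.subset_closure ⟨hKW hz, ε, hKE hz⟩
        · have hle : (⊤ : AddSubgroup R) ≤
              (AddSubgroup.closure {a : R | a ∈ W ∧ G.Homog a}).comap
                (AddMonoidHom.mulLeft k) := by
            rw [← G.iSup_eq_top]
            refine iSup_le fun s => fun z hz => AddSubgroup.mem_comap.mpr ?_
            show k * z ∈ AddSubgroup.closure {a : R | a ∈ W ∧ G.Homog a}
            by_cases hkz : k * z = 0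
            · rw [hkz]; exact zero_mem _
            · obtain ⟨u, hu⟩ := G.mul_cond ε s ⟨k, hKE hk, z, hz, hkz⟩
              exact AddSubgroup.subset_closure ⟨hkrW k hk z, u, hu k (hKE hk) z hz⟩
          exact AddSubgroup.mem_comap.mp (hle (AddSubgroup.mem_top r'))
      -- W is a homogeneous right ideal strictly above I, hence W = ⊤
      have hWtop : W = ⊤ := hImax W ⟨hWri, hWhom⟩
        (SetLike.lt_iff_le_and_exists.mpr ⟨hIW, x, hKW hxK, hxI⟩)
      have hIKN : I ≤ K ⊔ N := le_trans hIle (sup_le_sup_right hJleK N)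
      -- key: E ≤ K
      refine le_antisymm hKE fun a haE => ?_
      have hkey : ∀ w ∈ W, w * a ∈ K ⊔ N := by
        have hle : W ≤ (K ⊔ N).comap (AddMonoidHom.mulRight a) := by
          rw [hWdef]
          refine (AddSubgroup.closure_le _).mpr ?_
          rintro z ((hz | hz) | ⟨k, hk, r', rfl⟩)
          · exact AddSubgroup.mem_comap.mpr (hIKN (hIri z hz a))
          · exact AddSubgroup.mem_comap.mpr (AddSubgroup.mem_sup_left (hK.2 z hz a haE))
          · refine AddSubgroup.mem_comap.mpr ?_
            show k * r' * a ∈ K ⊔ N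
            rw [mul_assoc]
            have hkE : k ∈ G.component ε := hKE hk
            have hle2 : (⊤ : AddSubgroup R) ≤ (K ⊔ N).comap
                ((AddMonoidHom.mulLeft k).comp (AddMonoidHom.mulRight a)) := by
              rw [← G.iSup_eq_top]
              refine iSup_le fun s => fun z hz => AddSubgroup.mem_comap.mpr ?_
              show k * (z * a) ∈ K ⊔ N
              by_cases hkm : k * (z * a) = 0
              · rw [hkm]; exact zero_mem _
              · have hm0 : z * a ≠ 0 := by
                  intro h; exact hkm (by rw [h, mul_zero])
                obtain ⟨t, ht⟩ := G.mul_cond s ε ⟨z, hz, a, haE, hm0⟩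
                have hmt : z * a ∈ G.component t := ht z hz a haE
                obtain ⟨u, hu⟩ := G.mul_cond ε t ⟨k, hkE, z * a, hmt, hkm⟩
                have hkmu : k * (z * a) ∈ G.component u := hu k hkE _ hmt
                by_cases hus : u = ε
                · by_cases hke : k * e = 0
                  · have hkc : k ∈ G.core I := by
                      have h1 := (heU k).2
                      rw [hke, zero_sub] at h1
                      exact neg_mem_iff.mp h1
                    have h2 : k * (z * a) ∈ G.core I := (hcore_ideal k hkc (z * a)).1
                    exact AddSubgroup.mem_sup_left (hJleK (AddSubgroup.mem_inf.mpr
                      ⟨hcore_le h2, hus ▸ hkmu⟩))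
                  · have hk0 : k ≠ 0 := by rintro rfl; exact hke (zero_mul e)
                    have hadd : G.Addable (k * (z * a)) (k * e) :=
                      Or.inr (Or.inr ⟨ε, hus ▸ hkmu, hεmul k hkE e heE⟩)
                    have hres := (hreg (z * a) e k ⟨t, hmt⟩ ⟨ε, heE⟩ ⟨ε, hkE⟩
                      hm0 he0 hk0).2 hkm hke hadd
                    rcases hres with h | h | ⟨s', hms', hes'⟩
                    · exact absurd h hm0
                    · exact absurd h he0
                    · have hs' : s' = ε := huniq s' e hes' heE he0
                      exact AddSubgroup.mem_sup_left (hK.2 k hk (z * a) (hs' ▸ hms'))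
                · exact AddSubgroup.mem_sup_right (hmemN u hus _ hkmu)
            exact AddSubgroup.mem_comap.mp (hle2 (AddSubgroup.mem_top r'))
        exact fun w hw => AddSubgroup.mem_comap.mp (hle hw)
      have heaKN : e * a ∈ K ⊔ N := hkey e (by rw [hWtop]; trivial)
      obtain ⟨y, hy, z, hz, hyz⟩ := AddSubgroup.mem_sup.mp heaKN
      have heaE : e * a ∈ G.component ε := hεmul e heE a haE
      have hzE : z ∈ G.component ε := by
        have hz' : z = e * a - y := by rw [← hyz]; abel
        rw [hz']; exact sub_mem heaE (hKE hy)
      have hz0 : z = 0 := AddSubgroup.mem_bot.mp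
        (hdisj.le_bot (AddSubgroup.mem_inf.mpr ⟨hzE, hz⟩))
      have heaK : e * a ∈ K := by rw [← hyz, hz0, add_zero]; exact hy
      have h2 : e * a - a ∈ I ⊓ G.component ε :=
        AddSubgroup.mem_inf.mpr ⟨hcore_le (heU a).1, sub_mem heaE haE⟩
      exact (sub_sub_cancel (e * a) a) ▸ sub_mem heaK (hJleK h2)
  · refine ⟨e, heE, fun a haE => ?_⟩
    have hsub : G.core I ⊓ G.component ε ≤
        coreOn (G.component ε) (I ⊓ G.component ε) := by
      apply le_sSup
      refine ⟨⟨inf_le_right, ?_⟩, inf_le_inf_right _ hcore_le⟩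
      intro x hx r hr
      obtain ⟨hx1, hx2⟩ := AddSubgroup.mem_inf.mp hx
      exact ⟨AddSubgroup.mem_inf.mpr ⟨(hcore_ideal x hx1 r).1, hεmul x hx2 r hr⟩,
             AddSubgroup.mem_inf.mpr ⟨(hcore_ideal x hx1 r).2, hεmul r hr x hx2⟩⟩
    exact ⟨hsub (AddSubgroup.mem_inf.mpr ⟨(heU a).1, sub_mem (hεmul e heE a haE) haE⟩),
           hsub (AddSubgroup.mem_inf.mpr ⟨(heU a).2, sub_mem (hεmul a haE e heE) haE⟩)⟩
end

section
/- Let R be a regular S-graded ring with homogeneous part A such that S satisfies condition (Δ), and let ε ∈ S be an idempotent element. If I is a maximal right ideal of the ring R_ε such that the largest two-sided ideal of R_ε contained in I is a modular two-sided ideal of R_ε, then the right ideal of R generated by the set K = {x ∈ A : for every homogeneous y ∈ R, if xy ∈ R_ε then xy ∈ I} is a homogeneous right ideal of R, maximal among the proper homogeneous right ideals of R, and its core (the largest homogeneous ideal of R contained in it) is a modular homogeneous ideal of R of degree ε. -/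
/-!
Common framework: S-graded rings (rings that are direct sums of additive
subgroups indexed by a set S, with homogeneous products homogeneous),
homogeneous ideals, graded modules, and the various Brown--McCoy radicals.
-/

universe u v w

variable {S : Type v} {R : Type w} [NonUnitalRing R]

section Statement8Aux

namespace Statement8

/-- Degrees of nonzero homogeneous elements are unique. -/
lemma degEq (G : SGraded S R) {a : R} {s t : S} (h1 : a ∈ G.component s)
    (h2 : a ∈ G.component t) (ha : a ≠ 0) : s = t := by
  by_contra hne
  have hb : a ∈ (⊥ : AddSubgroup R) :=
    (G.independent s).le_bot
      (AddSubgroup.mem_inf.mpr ⟨h1,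
        (le_iSup₂ (f := fun (j : S) (_ : j ≠ s) => G.component j) t (Ne.symm hne)) h2⟩)
  exact ha (AddSubgroup.mem_bot.mp hb)

lemma coreOn_le {E J : AddSubgroup R} : coreOn E J ≤ J :=
  sSup_le fun _ hK => hK.2

lemma coreOn_le_base {E J : AddSubgroup R} : coreOn E J ≤ E :=
  sSup_le fun _ hK => hK.1.1

lemma coreOn_mul {E J : AddSubgroup R} :
    ∀ x ∈ coreOn E J, ∀ r ∈ E, x * r ∈ coreOn E J ∧ r * x ∈ coreOn E J := by
  have hc : coreOn E J ≤ AddSubgroup.closure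
      (⋃ K ∈ {K : AddSubgroup R | IsIdealOn E K ∧ K ≤ J}, (K : Set R)) := by
    refine sSup_le fun K hK => ?_
    intro x hx
    exact AddSubgroup.subset_closure (Set.mem_biUnion hK hx)
  intro x hx r hr
  refine AddSubgroup.closure_induction
    (p := fun z _ => z * r ∈ coreOn E J ∧ r * z ∈ coreOn E J) ?_ ?_ ?_ ?_ (hc hx)
  · intro z hz
    obtain ⟨K, hKmem, hzK⟩ := Set.mem_iUnion₂.mp hz
    have h2 := hKmem.1.2 z hzK r hr
    exact ⟨le_sSup hKmem h2.1, le_sSup hKmem h2.2⟩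
  · exact ⟨by rw [zero_mul]; exact zero_mem _, by rw [mul_zero]; exact zero_mem _⟩
  · intro a b _ _ ha hb
    exact ⟨by rw [add_mul]; exact add_mem ha.1 hb.1,
      by rw [mul_add]; exact add_mem ha.2 hb.2⟩
  · intro a _ ha
    exact ⟨by rw [neg_mul]; exact neg_mem ha.1,
      by rw [mul_neg]; exact neg_mem ha.2⟩

variable {G : SGraded S R} {ε : S} {I : AddSubgroup R} {e : R}

/-- The unity modulo the core is not in `I`. -/
lemma e_notMem
    (hIle : I ≤ G.component ε) (hIne : I ≠ G.component ε)
    (hImul : ∀ x ∈ I, ∀ r ∈ G.component ε, x * r ∈ I)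
    (hmode : ∀ a ∈ G.component ε, e * a - a ∈ coreOn (G.component ε) I ∧
      a * e - a ∈ coreOn (G.component ε) I) :
    e ∉ I := by
  intro heI
  apply hIne
  refine le_antisymm hIle fun a ha => ?_
  have h1 : e * a ∈ I := hImul e heI a ha
  have h2 : e * a - a ∈ I := coreOn_le (hmode a ha).1
  simpa using sub_mem h1 h2

lemma e_ne_zero
    (hIle : I ≤ G.component ε) (hIne : I ≠ G.component ε)
    (hImul : ∀ x ∈ I, ∀ r ∈ G.component ε, x * r ∈ I)
    (hmode : ∀ a ∈ G.component ε, e * a - a ∈ coreOn (G.component ε) I ∧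
      a * e - a ∈ coreOn (G.component ε) I) :
    e ≠ 0 := fun h =>
  e_notMem hIle hIne hImul hmode (h ▸ zero_mem I)

/-- L5: a homogeneous element of degree `s ≠ ε` multiplied on the right by an
element of `R_ε` never lands in `R_ε` nontrivially. -/
lemma kill_right (hreg : G.Regular) (hε : G.IsIdem ε)
    (hIle : I ≤ G.component ε) (hIne : I ≠ G.component ε)
    (hImul : ∀ x ∈ I, ∀ r ∈ G.component ε, x * r ∈ I)
    (he : e ∈ G.component ε)
    (hmode : ∀ a ∈ G.component ε, e * a - a ∈ coreOn (G.component ε) I ∧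
      a * e - a ∈ coreOn (G.component ε) I)
    {s : S} (hs : s ≠ ε) {a v : R} (ha : a ∈ G.component s) (hv : v ∈ G.component ε)
    (hav : a * v ∈ G.component ε) : a * v = 0 := by
  by_contra hne
  have heI : e ∉ I := e_notMem hIle hIne hImul hmode
  have he0 : e ≠ 0 := e_ne_zero hIle hIne hImul hmode
  have ha0 : a ≠ 0 := fun h => hne (by rw [h, zero_mul])
  obtain ⟨u, hu⟩ := G.mul_cond s ε ⟨a, ha, v, hv, hne⟩
  have huε : u = ε := degEq G (hu a ha v hv) hav hne
  have main : ∀ w ∈ G.component ε, a * w ≠ 0 → w ∈ I := by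
    intro w hw hne'
    by_cases hew : e * w = 0
    · have h1 := (hmode w hw).1
      rw [hew, zero_sub] at h1
      have h2 : w ∈ coreOn (G.component ε) I := by simpa using neg_mem h1
      exact coreOn_le h2
    · have hw0 : w ≠ 0 := fun h => hne' (by rw [h, mul_zero])
      have haw : a * w ∈ G.component ε := huε ▸ hu a ha w hw
      have hewε : e * w ∈ G.component ε := hε.2 e he w hw
      have hadd := (hreg a e w ⟨s, ha⟩ ⟨ε, he⟩ ⟨ε, hw⟩ ha0 he0 hw0).1 hne' hew
        (Or.inr (Or.inr ⟨ε, haw, hewε⟩))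
      rcases hadd with h | h | ⟨σ, haσ, heσ⟩
      · exact absurd h ha0
      · exact absurd h he0
      · have hσ : σ = ε := degEq G heσ he he0
        exact absurd (degEq G ha (hσ ▸ haσ) ha0) hs
  have hae : a * e = 0 := by
    by_contra h
    exact heI (main e he h)
  have hvI : v ∈ I := main v hv hne
  have hveI : v + e ∈ I := by
    refine main (v + e) (add_mem hv he) ?_
    rw [mul_add, hae, add_zero]
    exact hne
  exact heI (by simpa using sub_mem hveI hvI)

/-- L5': an element of `R_ε` multiplied on the right by a homogeneous element of
degree `t ≠ ε` never lands in `R_ε` nontrivially. -/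
lemma kill_left (hreg : G.Regular) (hε : G.IsIdem ε)
    (hIle : I ≤ G.component ε) (hIne : I ≠ G.component ε)
    (hImul : ∀ x ∈ I, ∀ r ∈ G.component ε, x * r ∈ I)
    (he : e ∈ G.component ε)
    (hmode : ∀ a ∈ G.component ε, e * a - a ∈ coreOn (G.component ε) I ∧
      a * e - a ∈ coreOn (G.component ε) I)
    {t : S} (ht : t ≠ ε) {y v : R} (hy : y ∈ G.component t) (hv : v ∈ G.component ε)
    (hvy : v * y ∈ G.component ε) : v * y = 0 := by
  by_contra hne
  have heI : e ∉ I := e_notMem hIle hIne hImul hmode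
  have he0 : e ≠ 0 := e_ne_zero hIle hIne hImul hmode
  have hy0 : y ≠ 0 := fun h => hne (by rw [h, mul_zero])
  obtain ⟨u, hu⟩ := G.mul_cond ε t ⟨v, hv, y, hy, hne⟩
  have huε : u = ε := degEq G (hu v hv y hy) hvy hne
  have main : ∀ w ∈ G.component ε, w * y ≠ 0 → w ∈ I := by
    intro w hw hne'
    by_cases hwe : w * e = 0
    · have h1 := (hmode w hw).2
      rw [hwe, zero_sub] at h1
      have h2 : w ∈ coreOn (G.component ε) I := by simpa using neg_mem h1
      exact coreOn_le h2
    · have hw0 : w ≠ 0 := fun h => hne' (by rw [h, zero_mul])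
      have hwy : w * y ∈ G.component ε := huε ▸ hu w hw y hy
      have hweε : w * e ∈ G.component ε := hε.2 w hw e he
      have hadd := (hreg y e w ⟨t, hy⟩ ⟨ε, he⟩ ⟨ε, hw⟩ hy0 he0 hw0).2 hne' hwe
        (Or.inr (Or.inr ⟨ε, hwy, hweε⟩))
      rcases hadd with h | h | ⟨σ, hyσ, heσ⟩
      · exact absurd h hy0
      · exact absurd h he0
      · have hσ : σ = ε := degEq G heσ he he0
        exact absurd (degEq G hy (hσ ▸ hyσ) hy0) ht
  have hev : e * y = 0 := by
    by_contra h
    exact heI (main e he h)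
  have hvI : v ∈ I := main v hv hne
  have hveI : v + e ∈ I := by
    refine main (v + e) (add_mem hv he) ?_
    rw [add_mul, hev, add_zero]
    exact hne
  exact heI (by simpa using sub_mem hveI hvI)

/-- L7: a product of two homogeneous elements of degrees `≠ ε` which lands in
`R_ε` lies in `I`. -/
lemma prod_mem_I (hreg : G.Regular) (hdelta : G.CondDelta) (hε : G.IsIdem ε)
    (hIle : I ≤ G.component ε) (hIne : I ≠ G.component ε)
    (hImul : ∀ x ∈ I, ∀ r ∈ G.component ε, x * r ∈ I)
    (he : e ∈ G.component ε)
    (hmode : ∀ a ∈ G.component ε, e * a - a ∈ coreOn (G.component ε) I ∧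
      a * e - a ∈ coreOn (G.component ε) I)
    {s t : S} (hs : s ≠ ε) (ht : t ≠ ε) {x y : R} (hx : x ∈ G.component s)
    (hy : y ∈ G.component t) (hxy : x * y ∈ G.component ε) : x * y ∈ I := by
  by_contra hnI
  have hne : x * y ≠ 0 := fun h => hnI (h ▸ zero_mem I)
  have hx0 : x ≠ 0 := fun h => hne (by rw [h, zero_mul])
  have hy0 : y ≠ 0 := fun h => hne (by rw [h, mul_zero])
  have heI : e ∉ I := e_notMem hIle hIne hImul hmode
  have he0 : e ≠ 0 := e_ne_zero hIle hIne hImul hmode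
  obtain ⟨u, hu⟩ := G.mul_cond s t ⟨x, hx, y, hy, hne⟩
  have huε : u = ε := degEq G (hu x hx y hy) hxy hne
  have hu' : ∀ p ∈ G.component s, ∀ q ∈ G.component t, p * q ∈ G.component ε :=
    fun p hp q hq => huε ▸ hu p hp q hq
  have hor : G.IsIdem s ∨ G.IsIdem t := by
    by_contra h
    push_neg at h
    exact (hdelta s t u ⟨x, hx, y, hy, hne⟩ hu h.1 h.2) (huε ▸ hε)
  rcases hor with hids | hidt
  · -- `s` idempotent
    have hstep : ∀ z' ∈ G.component s, z' * y ∉ I → e * z' ≠ 0 := by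
      intro z' hz' hz'y h0
      have h1 := (hmode (z' * y) (hu' z' hz' y hy)).1
      rw [← mul_assoc, h0, zero_mul, zero_sub] at h1
      exact hz'y (coreOn_le (by simpa using neg_mem h1))
    obtain ⟨u₁, hu₁⟩ := G.mul_cond ε s ⟨e, he, x, hx, hstep x hx hnI⟩
    have hexy0 : (e * x) * y ≠ 0 := by
      intro h0
      rw [mul_assoc] at h0
      have h1 := (hmode (x * y) hxy).1
      rw [h0, zero_sub] at h1
      exact hnI (coreOn_le (by simpa using neg_mem h1))
    have hexε : (e * x) * y ∈ G.component ε := by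
      rw [mul_assoc]; exact hε.2 e he _ hxy
    have hadd := (hreg x (e * x) y ⟨s, hx⟩ ⟨u₁, hu₁ e he x hx⟩ ⟨t, hy⟩ hx0
      (hstep x hx hnI) hy0).1 hne hexy0 (Or.inr (Or.inr ⟨ε, hxy, hexε⟩))
    have hexs : e * x ∈ G.component s := by
      rcases hadd with h | h | ⟨σ, hxσ, hexσ⟩
      · exact absurd h hx0
      · exact absurd h (hstep x hx hnI)
      · exact degEq G hxσ hx hx0 ▸ hexσ
    have hu₁s : u₁ = s := degEq G (hu₁ e he x hx) hexs (hstep x hx hnI)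
    have hkill : ∀ z' ∈ G.component s, z' * y ∉ I → ∀ z ∈ G.component s, z * z' = 0 := by
      intro z' hz' hz'y z hz
      by_contra hzz'
      have hz'0 : z' ≠ 0 := fun h => hz'y (by rw [h, zero_mul]; exact zero_mem I)
      have hz0 : z ≠ 0 := fun h => hzz' (by rw [h, zero_mul])
      have h1 : z * z' ∈ G.component s := hids.2 z hz z' hz'
      have h2 : e * z' ∈ G.component s := hu₁s ▸ hu₁ e he z' hz'
      have hadd2 := (hreg z e z' ⟨s, hz⟩ ⟨ε, he⟩ ⟨s, hz'⟩ hz0 he0 hz'0).1 hzz'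
        (hstep z' hz' hz'y) (Or.inr (Or.inr ⟨s, h1, h2⟩))
      rcases hadd2 with h | h | ⟨σ, hzσ, heσ⟩
      · exact hz0 h
      · exact he0 h
      · have hσ : σ = ε := degEq G heσ he he0
        exact hs (degEq G hz (hσ ▸ hzσ) hz0)
    obtain ⟨p, hp, q, hq, hpq⟩ := hids.1
    by_cases hqy : q * y ∈ I
    · have h1 : (q + x) * y ∉ I := by
        intro h
        rw [add_mul] at h
        exact hnI (by simpa using sub_mem h hqy)
      have e1 := hkill (q + x) (add_mem hq hx) h1 p hp
      have e2 := hkill x hx hnI p hp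
      apply hpq
      have : p * q = p * (q + x) - p * x := by rw [mul_add]; abel
      rw [this, e1, e2, sub_zero]
    · exact hpq (hkill q hq hqy p hp)
  · -- `t` idempotent
    have hstep : ∀ z' ∈ G.component t, x * z' ∉ I → z' * e ≠ 0 := by
      intro z' hz' hz'y h0
      have h1 := (hmode (x * z') (hu' x hx z' hz')).2
      rw [mul_assoc, h0, mul_zero, zero_sub] at h1
      exact hz'y (coreOn_le (by simpa using neg_mem h1))
    obtain ⟨u₂, hu₂⟩ := G.mul_cond t ε ⟨y, hy, e, he, hstep y hy hnI⟩
    have hxye0 : x * (y * e) ≠ 0 := by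
      intro h0
      rw [← mul_assoc] at h0
      have h1 := (hmode (x * y) hxy).2
      rw [h0, zero_sub] at h1
      exact hnI (coreOn_le (by simpa using neg_mem h1))
    have hxyeε : x * (y * e) ∈ G.component ε := by
      rw [← mul_assoc]; exact hε.2 _ hxy e he
    have hadd := (hreg y (y * e) x ⟨t, hy⟩ ⟨u₂, hu₂ y hy e he⟩ ⟨s, hx⟩ hy0
      (hstep y hy hnI) hx0).2 hne hxye0 (Or.inr (Or.inr ⟨ε, hxy, hxyeε⟩))
    have hyet : y * e ∈ G.component t := by
      rcases hadd with h | h | ⟨σ, hyσ, hyeσ⟩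
      · exact absurd h hy0
      · exact absurd h (hstep y hy hnI)
      · exact degEq G hyσ hy hy0 ▸ hyeσ
    have hu₂t : u₂ = t := degEq G (hu₂ y hy e he) hyet (hstep y hy hnI)
    have hkill : ∀ z' ∈ G.component t, x * z' ∉ I → ∀ z ∈ G.component t, z' * z = 0 := by
      intro z' hz' hz'y z hz
      by_contra hzz'
      have hz'0 : z' ≠ 0 := fun h => hz'y (by rw [h, mul_zero]; exact zero_mem I)
      have hz0 : z ≠ 0 := fun h => hzz' (by rw [h, mul_zero])
      have h1 : z' * z ∈ G.component t := hidt.2 z' hz' z hz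
      have h2 : z' * e ∈ G.component t := hu₂t ▸ hu₂ z' hz' e he
      have hadd2 := (hreg z e z' ⟨t, hz⟩ ⟨ε, he⟩ ⟨t, hz'⟩ hz0 he0 hz'0).2 hzz'
        (hstep z' hz' hz'y) (Or.inr (Or.inr ⟨t, h1, h2⟩))
      rcases hadd2 with h | h | ⟨σ, hzσ, heσ⟩
      · exact hz0 h
      · exact he0 h
      · have hσ : σ = ε := degEq G heσ he he0
        exact ht (degEq G hz (hσ ▸ hzσ) hz0)
    obtain ⟨p, hp, q, hq, hpq⟩ := hidt.1
    by_cases hxp : x * p ∈ I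
    · have h1 : x * (p + y) ∉ I := by
        intro h
        rw [mul_add] at h
        exact hnI (by simpa using sub_mem h hxp)
      have e1 := hkill (p + y) (add_mem hp hy) h1 q hq
      have e2 := hkill y hy hnI q hq
      apply hpq
      have : p * q = (p + y) * q - y * q := by rw [add_mul]; abel
      rw [this, e1, e2, sub_zero]
    · exact hpq (hkill p hp hxp q hq)

/-- L8: a product of two homogeneous elements of degrees `≠ ε` which lands in
`R_ε` lies in the core of `I`. -/
lemma prod_mem_core (hreg : G.Regular) (hdelta : G.CondDelta) (hε : G.IsIdem ε)
    (hIle : I ≤ G.component ε) (hIne : I ≠ G.component ε)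
    (hImul : ∀ x ∈ I, ∀ r ∈ G.component ε, x * r ∈ I)
    (he : e ∈ G.component ε)
    (hmode : ∀ a ∈ G.component ε, e * a - a ∈ coreOn (G.component ε) I ∧
      a * e - a ∈ coreOn (G.component ε) I)
    {s t : S} (hs : s ≠ ε) (ht : t ≠ ε) {x y : R} (hx : x ∈ G.component s)
    (hy : y ∈ G.component t) (hxy : x * y ∈ G.component ε) :
    x * y ∈ coreOn (G.component ε) I := by
  set W : Set R := {r : R | (∃ s' t' x' y', s' ≠ ε ∧ t' ≠ ε ∧ x' ∈ G.component s' ∧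
    y' ∈ G.component t' ∧ r = x' * y') ∧ r ∈ G.component ε} with hW
  have hWε : W ⊆ (G.component ε : Set R) := fun r hr => hr.2
  have hWI : W ⊆ (I : Set R) := by
    rintro r ⟨⟨s', t', x', y', hs', ht', hx', hy', rfl⟩, hrε⟩
    exact prod_mem_I hreg hdelta hε hIle hIne hImul he hmode hs' ht' hx' hy' hrε
  have hJW : IsIdealOn (G.component ε) (AddSubgroup.closure W) ∧
      AddSubgroup.closure W ≤ I := by
    refine ⟨⟨(AddSubgroup.closure_le _).mpr hWε, ?_⟩, (AddSubgroup.closure_le _).mpr hWI⟩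
    intro z hz r hr
    refine AddSubgroup.closure_induction
      (p := fun z _ => z * r ∈ AddSubgroup.closure W ∧ r * z ∈ AddSubgroup.closure W)
      ?_ ?_ ?_ ?_ hz
    · rintro w ⟨⟨s', t', x', y', hs', ht', hx', hy', rfl⟩, hwε⟩
      constructor
      · by_cases h0 : y' * r = 0
        · rw [mul_assoc, h0, mul_zero]; exact zero_mem _
        · obtain ⟨u₃, hu₃⟩ := G.mul_cond t' ε ⟨y', hy', r, hr, h0⟩
          have hu₃ne : u₃ ≠ ε := by
            intro h
            exact h0 (kill_right hreg hε hIle hIne hImul he hmode ht' hy' hr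
              (h ▸ hu₃ y' hy' r hr))
          refine AddSubgroup.subset_closure ?_
          refine ⟨⟨s', u₃, x', y' * r, hs', hu₃ne, hx', hu₃ y' hy' r hr, mul_assoc _ _ _⟩, ?_⟩
          exact hε.2 _ hwε r hr
      · by_cases h0 : r * x' = 0
        · rw [← mul_assoc, h0, zero_mul]; exact zero_mem _
        · obtain ⟨u₄, hu₄⟩ := G.mul_cond ε s' ⟨r, hr, x', hx', h0⟩
          have hu₄ne : u₄ ≠ ε := by
            intro h
            exact h0 (kill_left hreg hε hIle hIne hImul he hmode hs' hx' hr
              (h ▸ hu₄ r hr x' hx'))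
          refine AddSubgroup.subset_closure ?_
          refine ⟨⟨u₄, t', r * x', y', hu₄ne, ht', hu₄ r hr x' hx', hy', (mul_assoc _ _ _).symm⟩, ?_⟩
          exact hε.2 r hr _ hwε
    · exact ⟨by rw [zero_mul]; exact zero_mem _, by rw [mul_zero]; exact zero_mem _⟩
    · intro a b _ _ ha hb
      exact ⟨by rw [add_mul]; exact add_mem ha.1 hb.1,
        by rw [mul_add]; exact add_mem ha.2 hb.2⟩
    · intro a _ ha
      exact ⟨by rw [neg_mul]; exact neg_mem ha.1,
        by rw [mul_neg]; exact neg_mem ha.2⟩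
  have hle : AddSubgroup.closure W ≤ coreOn (G.component ε) I :=
    le_sSup (s := {K : AddSubgroup R | IsIdealOn (G.component ε) K ∧ K ≤ I}) hJW
  exact hle (AddSubgroup.subset_closure ⟨⟨s, t, x, y, hs, ht, hx, hy, rfl⟩, hxy⟩)


/-- To prove a property of all ring elements it is enough to prove it for all
homogeneous elements, provided the property is additively closed. -/
lemma top_le_of_comp (G : SGraded S R) {P : R → Prop}
    (h0 : P 0) (hadd : ∀ a b, P a → P b → P (a + b)) (hneg : ∀ a, P a → P (-a))
    (hcomp : ∀ τ : S, ∀ a ∈ G.component τ, P a) : ∀ a : R, P a := by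
  intro a
  let T : AddSubgroup R :=
    { carrier := {x | P x}
      zero_mem' := h0
      add_mem' := fun {x y} hx hy => hadd x y hx hy
      neg_mem' := fun {x} hx => hneg x hx }
  have hT : (⊤ : AddSubgroup R) ≤ T := by
    rw [← G.iSup_eq_top]
    exact iSup_le fun τ => fun x hx => hcomp τ x hx
  exact hT (AddSubgroup.mem_top a)

end Statement8

end Statement8Aux

/-- Let `R` be a regular `S`-graded ring satisfying condition (Δ) and
`ε ∈ S` idempotent. If `I` is a maximal right ideal of `R_ε` whose largest two-sided
ideal is modular, then the right ideal of `R` generated by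
`K = {x ∈ A : ∀ homogeneous y, xy ∈ R_ε → xy ∈ I}` is a homogeneous right ideal,
maximal among the proper homogeneous right ideals of `R`, whose core is a modular
homogeneous ideal of `R` of degree `ε`. -/
theorem maxRightIdealOn_lift (G : SGraded S R) (hreg : G.Regular) (hdelta : G.CondDelta)
    (ε : S) (hε : G.IsIdem ε) (I : AddSubgroup R)
    (hI : IsMaxRightIdealOn (G.component ε) I)
    (hmod : IsModularIdealOn (G.component ε) (coreOn (G.component ε) I))
    (K : AddSubgroup R)
    (hK : K = rightIdealGen {x : R | G.Homog x ∧ ∀ y : R, G.Homog y →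
      x * y ∈ G.component ε → x * y ∈ I}) :
    G.IsMaxHomRightIdeal K ∧ G.IsModularHomIdeal (G.core K) ∧
    ∃ e, e ≠ 0 ∧ e ∈ G.component ε ∧ IsUnityMod e (G.core K) := by
  classical
  subst hK
  obtain ⟨⟨hIle, hImul⟩, hIne, hImax⟩ := hI
  obtain ⟨e, he, hmode'⟩ := hmod
  have hmode : ∀ a ∈ G.component ε, e * a - a ∈ coreOn (G.component ε) I ∧
      a * e - a ∈ coreOn (G.component ε) I := hmode'
  have heI : e ∉ I := Statement8.e_notMem hIle hIne hImul hmode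
  have he0 : e ≠ 0 := Statement8.e_ne_zero hIle hIne hImul hmode
  set Tset : Set R := {x : R | G.Homog x ∧ ∀ y : R, G.Homog y →
    x * y ∈ G.component ε → x * y ∈ I} with hTset
  set Uset : Set R := {a : R | ∃ s, s ≠ ε ∧ a ∈ G.component s} with hUset
  set Qc : AddSubgroup R := AddSubgroup.closure Uset with hQc
  set C : AddSubgroup R := I ⊔ Qc with hC
  have hIC : I ≤ C := le_sup_left
  have hQC : Qc ≤ C := le_sup_right
  have hcompQ : ∀ σ : S, σ ≠ ε → G.component σ ≤ Qc := fun σ hσ x hx =>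
    AddSubgroup.subset_closure ⟨σ, hσ, hx⟩
  have hQle : Qc ≤ ⨆ (j : S) (_ : j ≠ ε), G.component j := by
    rw [hQc]
    refine (AddSubgroup.closure_le _).mpr ?_
    rintro x ⟨σ, hσ, hx⟩
    exact (le_iSup₂ (f := fun (j : S) (_ : j ≠ ε) => G.component j) σ hσ) hx
  have hQzero : ∀ a ∈ Qc, a ∈ G.component ε → a = 0 := by
    intro a ha haε
    exact AddSubgroup.mem_bot.mp ((G.independent ε).le_bot
      (AddSubgroup.mem_inf.mpr ⟨haε, hQle ha⟩))
  have hCE : ∀ a ∈ C, a ∈ G.component ε → a ∈ I := by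
    intro a ha haε
    obtain ⟨i, hi, q, hq, hiq⟩ := AddSubgroup.mem_sup.mp ha
    have hqε : q ∈ G.component ε := by
      have hq' : q = a - i := by rw [← hiq]; abel
      rw [hq']; exact sub_mem haε (hIle hi)
    have hq0 : q = 0 := hQzero q hq hqε
    rw [← hiq, hq0, add_zero]; exact hi
  have hIT : (I : Set R) ⊆ Tset := by
    intro x hx
    refine ⟨⟨ε, hIle hx⟩, ?_⟩
    rintro y ⟨τ, hyτ⟩ hxyε
    by_cases hτ : τ = ε
    · exact hImul x hx y (hτ ▸ hyτ)
    · rw [Statement8.kill_left hreg hε hIle hIne hImul he hmode hτ hyτ (hIle hx) hxyε]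
      exact zero_mem I
  have hUT : Uset ⊆ Tset := by
    rintro x ⟨σ, hσ, hxσ⟩
    refine ⟨⟨σ, hxσ⟩, ?_⟩
    rintro y ⟨τ, hyτ⟩ hxyε
    by_cases hτ : τ = ε
    · rw [Statement8.kill_right hreg hε hIle hIne hImul he hmode hσ hxσ (hτ ▸ hyτ) hxyε]
      exact zero_mem I
    · exact Statement8.prod_mem_I hreg hdelta hε hIle hIne hImul he hmode hσ hτ hxσ hyτ hxyε
  have hTC : Tset ⊆ (C : Set R) := by
    rintro x ⟨⟨σ, hxσ⟩, hcond⟩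
    by_cases hσ : σ = ε
    · have hxE : x ∈ G.component ε := hσ ▸ hxσ
      have hxe : x * e ∈ I := hcond e ⟨ε, he⟩ (hε.2 x hxE e he)
      have hd : x * e - x ∈ I := Statement8.coreOn_le (hmode x hxE).2
      have hxI : x ∈ I := by simpa using sub_mem hxe hd
      exact hIC hxI
    · exact hQC (hcompQ σ hσ hxσ)
  have hgen : ∀ g ∈ (I : Set R) ∪ Uset, ∀ τ : S, ∀ rr ∈ G.component τ, g * rr ∈ C := by
    rintro g (hg | ⟨σ, hσ, hgσ⟩) τ rr hrr
    · by_cases hτ : τ = ε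
      · exact hIC (hImul g hg rr (hτ ▸ hrr))
      · by_cases h0 : g * rr = 0
        · rw [h0]; exact zero_mem C
        · obtain ⟨u, hu⟩ := G.mul_cond ε τ ⟨g, hIle hg, rr, hrr, h0⟩
          by_cases huε : u = ε
          · exact absurd (Statement8.kill_left hreg hε hIle hIne hImul he hmode hτ hrr
              (hIle hg) (huε ▸ hu g (hIle hg) rr hrr)) h0
          · exact hQC (hcompQ u huε (hu g (hIle hg) rr hrr))
    · by_cases h0 : g * rr = 0
      · rw [h0]; exact zero_mem C
      · obtain ⟨u, hu⟩ := G.mul_cond σ τ ⟨g, hgσ, rr, hrr, h0⟩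
        by_cases huε : u = ε
        · by_cases hτ : τ = ε
          · exact absurd (Statement8.kill_right hreg hε hIle hIne hImul he hmode hσ hgσ
              (hτ ▸ hrr) (huε ▸ hu g hgσ rr hrr)) h0
          · exact hIC (Statement8.prod_mem_I hreg hdelta hε hIle hIne hImul he hmode
              hσ hτ hgσ hrr (huε ▸ hu g hgσ rr hrr))
        · exact hQC (hcompQ u huε (hu g hgσ rr hrr))
  have hCeq : C = AddSubgroup.closure ((I : Set R) ∪ Uset) := by
    rw [hC, AddSubgroup.closure_union, AddSubgroup.closure_eq]
  have hCright : IsRightIdeal C := by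
    intro x hx r
    have hx' : x ∈ AddSubgroup.closure ((I : Set R) ∪ Uset) := hCeq ▸ hx
    revert r
    refine AddSubgroup.closure_induction (p := fun z _ => ∀ r : R, z * r ∈ C) ?_ ?_ ?_ ?_ hx'
    · intro g hg
      refine Statement8.top_le_of_comp G (P := fun r => g * r ∈ C) ?_ ?_ ?_ ?_
      · show g * 0 ∈ C; rw [mul_zero]; exact zero_mem C
      · intro a b ha hb; show g * (a + b) ∈ C; rw [mul_add]; exact add_mem ha hb
      · intro a ha; show g * (-a) ∈ C; rw [mul_neg]; exact neg_mem ha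
      · exact fun τ a haτ => hgen g hg τ a haτ
    · intro r; rw [zero_mul]; exact zero_mem C
    · intro a b _ _ ha hb r; rw [add_mul]; exact add_mem (ha r) (hb r)
    · intro a _ ha r; rw [neg_mul]; exact neg_mem (ha r)
  have hKC : rightIdealGen Tset = C := by
    refine le_antisymm (sInf_le ⟨hTC, hCright⟩) (le_sInf fun J hJ => ?_)
    rw [hC]
    refine sup_le (fun x hx => hJ.1 (hIT hx)) ?_
    exact (AddSubgroup.closure_le _).mpr fun x hx => hJ.1 (hUT hx)
  have hChom : G.IsHomSubgroup C := by
    refine le_antisymm ?_ ((AddSubgroup.closure_le _).mpr fun a ha => ha.1)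
    have h1 : AddSubgroup.closure ((I : Set R) ∪ Uset) ≤
        AddSubgroup.closure {a : R | a ∈ C ∧ G.Homog a} := by
      refine AddSubgroup.closure_mono ?_
      rintro g (hg | ⟨σ, hσ, hgσ⟩)
      · exact ⟨hIC hg, ⟨ε, hIle hg⟩⟩
      · exact ⟨hQC (hcompQ σ hσ hgσ), ⟨σ, hgσ⟩⟩
    exact le_trans (le_of_eq hCeq) h1
  have heC : e ∉ C := fun hec => heI (hCE e hec he)
  have hCne : C ≠ ⊤ := fun h => heC (by rw [h]; exact AddSubgroup.mem_top e)
  have hCmax : ∀ L : AddSubgroup R, G.IsHomRightIdeal L → C < L → L = ⊤ := by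
    intro L hL hCL
    have hEL : G.component ε ≤ L := by
      have hz : ∃ z, (z ∈ L ∧ G.Homog z) ∧ z ∉ C := by
        by_contra h
        push_neg at h
        have hLC : L ≤ C := by
          nth_rewrite 1 [hL.2]
          exact (AddSubgroup.closure_le _).mpr fun a ha => h a ha
        exact absurd hLC (not_le_of_gt hCL)
      obtain ⟨z, ⟨hzL, σ, hzσ⟩, hzC⟩ := hz
      have hσε : σ = ε := by
        by_contra hσ
        exact hzC (hQC (hcompQ σ hσ hzσ))
      have hzε : z ∈ G.component ε := hσε ▸ hzσ
      have hzI : z ∉ I := fun h => hzC (hIC h)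
      have hD : IsRightIdealOn (G.component ε) (L ⊓ G.component ε) := by
        refine ⟨inf_le_right, ?_⟩
        intro x hx r hr
        obtain ⟨hxL, hxε⟩ := AddSubgroup.mem_inf.mp hx
        exact AddSubgroup.mem_inf.mpr ⟨hL.1 x hxL r, hε.2 x hxε r hr⟩
      have hIltD : I < L ⊓ G.component ε := by
        refine lt_of_le_of_ne (fun x hx => AddSubgroup.mem_inf.mpr
          ⟨le_of_lt hCL (hIC hx), hIle hx⟩) ?_
        intro h
        exact hzI (by rw [h]; exact AddSubgroup.mem_inf.mpr ⟨hzL, hzε⟩)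
      have hDE := hImax (L ⊓ G.component ε) hD hIltD inf_le_right
      intro a ha
      have ha' : a ∈ L ⊓ G.component ε := by rw [hDE]; exact ha
      exact (AddSubgroup.mem_inf.mp ha').1
    refine top_unique ?_
    rw [← G.iSup_eq_top]
    refine iSup_le fun τ => ?_
    by_cases hτ : τ = ε
    · exact hτ ▸ hEL
    · exact le_trans (hcompQ τ hτ) (le_trans le_sup_right (le_of_lt hCL))
  set Ic : AddSubgroup R := coreOn (G.component ε) I with hIc
  set P : AddSubgroup R := Ic ⊔ Qc with hP
  have hIcP : Ic ≤ P := le_sup_left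
  have hQP : Qc ≤ P := le_sup_right
  have hIcE : Ic ≤ G.component ε := Statement8.coreOn_le_base
  have hIcI : Ic ≤ I := Statement8.coreOn_le
  have hPeq : P = AddSubgroup.closure ((Ic : Set R) ∪ Uset) := by
    rw [hP, AddSubgroup.closure_union, AddSubgroup.closure_eq]
  have hgen2 : ∀ g ∈ (Ic : Set R) ∪ Uset, ∀ τ : S, ∀ rr ∈ G.component τ,
      g * rr ∈ P ∧ rr * g ∈ P := by
    rintro g (hg | ⟨σ, hσ, hgσ⟩) τ rr hrr
    · constructor
      · by_cases hτ : τ = ε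
        · exact hIcP ((Statement8.coreOn_mul g hg rr (hτ ▸ hrr)).1)
        · by_cases h0 : g * rr = 0
          · rw [h0]; exact zero_mem P
          · obtain ⟨u, hu⟩ := G.mul_cond ε τ ⟨g, hIcE hg, rr, hrr, h0⟩
            by_cases huε : u = ε
            · exact absurd (Statement8.kill_left hreg hε hIle hIne hImul he hmode hτ hrr
                (hIcE hg) (huε ▸ hu g (hIcE hg) rr hrr)) h0
            · exact hQP (hcompQ u huε (hu g (hIcE hg) rr hrr))
      · by_cases hτ : τ = ε
        · exact hIcP ((Statement8.coreOn_mul g hg rr (hτ ▸ hrr)).2)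
        · by_cases h0 : rr * g = 0
          · rw [h0]; exact zero_mem P
          · obtain ⟨u, hu⟩ := G.mul_cond τ ε ⟨rr, hrr, g, hIcE hg, h0⟩
            by_cases huε : u = ε
            · exact absurd (Statement8.kill_right hreg hε hIle hIne hImul he hmode hτ hrr
                (hIcE hg) (huε ▸ hu rr hrr g (hIcE hg))) h0
            · exact hQP (hcompQ u huε (hu rr hrr g (hIcE hg)))
    · constructor
      · by_cases h0 : g * rr = 0
        · rw [h0]; exact zero_mem P
        · obtain ⟨u, hu⟩ := G.mul_cond σ τ ⟨g, hgσ, rr, hrr, h0⟩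
          by_cases huε : u = ε
          · by_cases hτ : τ = ε
            · exact absurd (Statement8.kill_right hreg hε hIle hIne hImul he hmode hσ hgσ
                (hτ ▸ hrr) (huε ▸ hu g hgσ rr hrr)) h0
            · exact hIcP (Statement8.prod_mem_core hreg hdelta hε hIle hIne hImul he
                hmode hσ hτ hgσ hrr (huε ▸ hu g hgσ rr hrr))
          · exact hQP (hcompQ u huε (hu g hgσ rr hrr))
      · by_cases h0 : rr * g = 0
        · rw [h0]; exact zero_mem P
        · obtain ⟨u, hu⟩ := G.mul_cond τ σ ⟨rr, hrr, g, hgσ, h0⟩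
          by_cases huε : u = ε
          · by_cases hτ : τ = ε
            · exact absurd (Statement8.kill_left hreg hε hIle hIne hImul he hmode hσ hgσ
                (hτ ▸ hrr) (huε ▸ hu rr hrr g hgσ)) h0
            · exact hIcP (Statement8.prod_mem_core hreg hdelta hε hIle hIne hImul he
                hmode hτ hσ hrr hgσ (huε ▸ hu rr hrr g hgσ))
          · exact hQP (hcompQ u huε (hu rr hrr g hgσ))
  have hPideal : IsTwoSidedIdeal' P := by
    intro x hx r
    have hx' : x ∈ AddSubgroup.closure ((Ic : Set R) ∪ Uset) := hPeq ▸ hx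
    revert r
    refine AddSubgroup.closure_induction (p := fun z _ => ∀ r : R, z * r ∈ P ∧ r * z ∈ P)
      ?_ ?_ ?_ ?_ hx'
    · intro g hg
      refine Statement8.top_le_of_comp G (P := fun r => g * r ∈ P ∧ r * g ∈ P) ?_ ?_ ?_ ?_
      · exact ⟨by show g * 0 ∈ P; rw [mul_zero]; exact zero_mem P,
          by show 0 * g ∈ P; rw [zero_mul]; exact zero_mem P⟩
      · intro a b ha hb
        exact ⟨by show g * (a + b) ∈ P; rw [mul_add]; exact add_mem ha.1 hb.1,
          by show (a + b) * g ∈ P; rw [add_mul]; exact add_mem ha.2 hb.2⟩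
      · intro a ha
        exact ⟨by show g * (-a) ∈ P; rw [mul_neg]; exact neg_mem ha.1,
          by show (-a) * g ∈ P; rw [neg_mul]; exact neg_mem ha.2⟩
      · exact fun τ a haτ => hgen2 g hg τ a haτ
    · intro r
      exact ⟨by rw [zero_mul]; exact zero_mem P, by rw [mul_zero]; exact zero_mem P⟩
    · intro a b _ _ ha hb r
      exact ⟨by rw [add_mul]; exact add_mem (ha r).1 (hb r).1,
        by rw [mul_add]; exact add_mem (ha r).2 (hb r).2⟩
    · intro a _ ha r
      exact ⟨by rw [neg_mul]; exact neg_mem (ha r).1, by rw [mul_neg]; exact neg_mem (ha r).2⟩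
  have hPhom : G.IsHomSubgroup P := by
    refine le_antisymm ?_ ((AddSubgroup.closure_le _).mpr fun a ha => ha.1)
    have h1 : AddSubgroup.closure ((Ic : Set R) ∪ Uset) ≤
        AddSubgroup.closure {a : R | a ∈ P ∧ G.Homog a} := by
      refine AddSubgroup.closure_mono ?_
      rintro g (hg | ⟨σ, hσ, hgσ⟩)
      · exact ⟨hIcP hg, ⟨ε, hIcE hg⟩⟩
      · exact ⟨hQP (hcompQ σ hσ hgσ), ⟨σ, hgσ⟩⟩
    exact le_trans (le_of_eq hPeq) h1
  have hPmax : ∀ J : AddSubgroup R, G.IsHomIdeal J → J ≤ C → J ≤ P := by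
    intro J hJ hJC
    have hgens : {a : R | a ∈ J ∧ G.Homog a} ⊆ (P : Set R) := by
      rintro a ⟨haJ, σ, haσ⟩
      by_cases hσ : σ = ε
      · have haε : a ∈ G.component ε := hσ ▸ haσ
        have hDideal : IsIdealOn (G.component ε) (J ⊓ G.component ε) := by
          refine ⟨inf_le_right, ?_⟩
          intro x hx r hr
          obtain ⟨hxJ, hxε⟩ := AddSubgroup.mem_inf.mp hx
          obtain ⟨h1, h2⟩ := hJ.1 x hxJ r
          exact ⟨AddSubgroup.mem_inf.mpr ⟨h1, hε.2 x hxε r hr⟩,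
            AddSubgroup.mem_inf.mpr ⟨h2, hε.2 r hr x hxε⟩⟩
        have hDle : J ⊓ G.component ε ≤ I := by
          intro x hx
          obtain ⟨hxJ, hxε⟩ := AddSubgroup.mem_inf.mp hx
          exact hCE x (hJC hxJ) hxε
        have hJIc : J ⊓ G.component ε ≤ Ic := le_sSup ⟨hDideal, hDle⟩
        exact hIcP (hJIc (AddSubgroup.mem_inf.mpr ⟨haJ, haε⟩))
      · exact hQP (hcompQ σ hσ haσ)
    calc J = AddSubgroup.closure {a : R | a ∈ J ∧ G.Homog a} := hJ.2
      _ ≤ P := (AddSubgroup.closure_le _).mpr hgens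
  have hcoreC : G.core C = P := by
    refine le_antisymm (sSup_le fun J hJ => hPmax J hJ.1 hJ.2) ?_
    exact le_sSup ⟨⟨hPideal, hPhom⟩, sup_le (le_trans hIcI le_sup_left) le_sup_right⟩
  have hunity : ∀ a : R, e * a - a ∈ P ∧ a * e - a ∈ P := by
    refine Statement8.top_le_of_comp G
      (P := fun a => e * a - a ∈ P ∧ a * e - a ∈ P) ?_ ?_ ?_ ?_
    · exact ⟨by show e * 0 - 0 ∈ P; rw [mul_zero, sub_zero]; exact zero_mem P,
        by show 0 * e - 0 ∈ P; rw [zero_mul, sub_zero]; exact zero_mem P⟩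
    · intro a b ha hb
      constructor
      · have h' : e * (a + b) - (a + b) = (e * a - a) + (e * b - b) := by
          rw [mul_add]; abel
        rw [h']; exact add_mem ha.1 hb.1
      · have h' : (a + b) * e - (a + b) = (a * e - a) + (b * e - b) := by
          rw [add_mul]; abel
        rw [h']; exact add_mem ha.2 hb.2
    · intro a ha
      constructor
      · have h' : e * (-a) - (-a) = -(e * a - a) := by rw [mul_neg]; abel
        rw [h']; exact neg_mem ha.1
      · have h' : (-a) * e - (-a) = -(a * e - a) := by rw [neg_mul]; abel
        rw [h']; exact neg_mem ha.2
    · intro τ a haτ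
      by_cases hτ : τ = ε
      · have haε : a ∈ G.component ε := hτ ▸ haτ
        exact ⟨hIcP (hmode a haε).1,
          hIcP (hmode a haε).2⟩
      · have haQ : a ∈ P := hQP (hcompQ τ hτ haτ)
        constructor
        · by_cases h0 : e * a = 0
          · rw [h0, zero_sub]; exact neg_mem haQ
          · obtain ⟨u, hu⟩ := G.mul_cond ε τ ⟨e, he, a, haτ, h0⟩
            by_cases huε : u = ε
            · exact absurd (Statement8.kill_left hreg hε hIle hIne hImul he hmode hτ haτ he
                (huε ▸ hu e he a haτ)) h0
            · exact sub_mem (hQP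
                (hcompQ u huε (hu e he a haτ))) haQ
        · by_cases h0 : a * e = 0
          · rw [h0, zero_sub]; exact neg_mem haQ
          · obtain ⟨u, hu⟩ := G.mul_cond τ ε ⟨a, haτ, e, he, h0⟩
            by_cases huε : u = ε
            · exact absurd (Statement8.kill_right hreg hε hIle hIne hImul he hmode hτ haτ he
                (huε ▸ hu a haτ e he)) h0
            · exact sub_mem (hQP
                (hcompQ u huε (hu a haτ e he))) haQ
  rw [hKC]
  refine ⟨⟨⟨hCright, hChom⟩, hCne, hCmax⟩, ?_, ?_⟩
  · rw [hcoreC]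
    exact ⟨⟨hPideal, hPhom⟩, e, ⟨ε, he⟩, hunity⟩
  · rw [hcoreC]
    exact ⟨e, he0, he, hunity⟩
end

section
/- Let R be an S-graded ring and let I be a proper modular homogeneous ideal of R with unity e modulo I. Then e ∉ I, e² ≠ 0, e² and e are addable, and the degree δ(e) of e is an idempotent element of S. -/
/-!
Common framework: S-graded rings (rings that are direct sums of additive
subgroups indexed by a set S, with homogeneous products homogeneous),
homogeneous ideals, graded modules, and the various Brown--McCoy radicals.
-/

universe u v w

variable {S : Type v} {R : Type w} [NonUnitalRing R]


open DirectSum in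
/-- Auxiliary: projection onto the `s`-th component of an `S`-graded ring. -/
theorem SGraded.exists_proj {S : Type v} {R : Type w} [NonUnitalRing R]
    (G : SGraded S R) (s : S) :
    ∃ π : R →+ R, (∀ x ∈ G.component s, π x = x) ∧
      (∀ t, t ≠ s → ∀ x ∈ G.component t, π x = 0) := by
  classical
  set P : S → Submodule ℤ R := fun s => AddSubgroup.toIntSubmodule (G.component s) with hP
  have hint : DirectSum.IsInternal P := by
    rw [DirectSum.isInternal_submodule_iff_iSupIndep_and_iSup_eq_top]
    constructor
    · exact G.independent.map_orderIso AddSubgroup.toIntSubmodule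
    · rw [show (⨆ i, P i) = AddSubgroup.toIntSubmodule (⨆ s, G.component s) from
        (OrderIso.map_iSup _ _).symm, G.iSup_eq_top]
      exact OrderIso.map_top _
  set equiv := LinearEquiv.ofBijective (DirectSum.coeLinearMap P) hint with hequiv
  have hsymm : ∀ t : S, ∀ x : R, (hx : x ∈ P t) →
      equiv.symm x = DirectSum.lof ℤ S (fun i => P i) t ⟨x, hx⟩ := by
    intro t x hx
    rw [LinearEquiv.symm_apply_eq]
    exact (DirectSum.coeLinearMap_of P t ⟨x, hx⟩).symm
  refine ⟨{ toFun := fun x => ((equiv.symm x) s : R),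
            map_zero' := by simp,
            map_add' := fun a b => by simp }, ?_, ?_⟩
  · intro x hx
    have := hsymm s x hx
    simp only [AddMonoidHom.coe_mk, ZeroHom.coe_mk, this, DirectSum.lof_eq_of,
      DirectSum.of_eq_same]
  · intro t hts x hx
    have := hsymm t x hx
    simp only [AddMonoidHom.coe_mk, ZeroHom.coe_mk, this, DirectSum.lof_eq_of,
      DirectSum.of_eq_of_ne _ _ _ (Ne.symm hts)]
    rfl

/-- Auxiliary: a component projection maps a homogeneous subgroup into itself. -/
theorem SGraded.proj_mem_of_homSubgroup {S : Type v} {R : Type w} [NonUnitalRing R]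
    (G : SGraded S R) {I : AddSubgroup R} (hI : G.IsHomSubgroup I) {s : S} {π : R →+ R}
    (h1 : ∀ x ∈ G.component s, π x = x) (h2 : ∀ t, t ≠ s → ∀ x ∈ G.component t, π x = 0)
    {x : R} (hx : x ∈ I) : π x ∈ I := by
  classical
  rw [hI] at hx
  refine AddSubgroup.closure_induction (fun g hg => ?_)
    (by rw [map_zero]; exact I.zero_mem)
    (fun a b _ _ ha hb => by rw [map_add]; exact I.add_mem ha hb)
    (fun a _ ha => by rw [map_neg]; exact I.neg_mem ha) hx
  obtain ⟨hgI, t, hgt⟩ := hg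
  by_cases hts : t = s
  · rw [h1 g (hts ▸ hgt)]; exact hgI
  · rw [h2 t hts g hgt]; exact I.zero_mem

/-- If `I` is a proper modular homogeneous ideal of an `S`-graded
ring `R` with homogeneous unity `e` modulo `I`, then `e ∉ I`, `e² ≠ 0`, `e²` and `e`
are addable, and the degree of `e` is an idempotent element of `S`. -/
theorem unityMod_degree_isIdem (G : SGraded S R) (I : AddSubgroup R)
    (hI : G.IsHomIdeal I) (hproper : I ≠ ⊤)
    (e : R) (he : G.Homog e) (hu : IsUnityMod e I) :
    e ∉ I ∧ e * e ≠ 0 ∧ G.Addable (e * e) e ∧ ∀ s : S, e ∈ G.component s → G.IsIdem s := by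
  have heI : e ∉ I := by
    intro heI
    apply hproper
    rw [AddSubgroup.eq_top_iff']
    intro a
    have h1 : e * a - a ∈ I := (hu a).1
    have h2 : e * a ∈ I := (hI.1 e heI a).1
    simpa using I.sub_mem h2 h1
  have hee : e * e - e ∈ I := (hu e).1
  have hee0 : e * e ≠ 0 := by
    intro h
    apply heI
    rw [h, zero_sub] at hee
    simpa using I.neg_mem hee
  have key : ∀ s, e ∈ G.component s → G.IsIdem s ∧ e * e ∈ G.component s := by
    intro s hs
    obtain ⟨u, hu'⟩ := G.mul_cond s s ⟨e, hs, e, hs, hee0⟩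
    have heeu : e * e ∈ G.component u := hu' e hs e hs
    have hus : u = s := by
      by_contra hne
      obtain ⟨π, hπ1, hπ2⟩ := G.exists_proj s
      have hmem : π (e * e - e) ∈ I :=
        G.proj_mem_of_homSubgroup hI.2 hπ1 hπ2 hee
      rw [map_sub, hπ2 u hne _ heeu, hπ1 e hs, zero_sub] at hmem
      exact heI (by simpa using I.neg_mem hmem)
    subst hus
    exact ⟨⟨⟨e, hs, e, hs, hee0⟩, hu'⟩, heeu⟩
  obtain ⟨s, hs⟩ := he
  exact ⟨heI, hee0, Or.inr (Or.inr ⟨s, (key s hs).2, hs⟩), fun t ht => (key t ht).1⟩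
end

section
/- Let R be a regular S-graded ring and let I be a proper modular homogeneous ideal of R. If e and e' are both unities modulo I, then e and e' are addable, i.e., they have the same degree δ(e) = δ(e'), and this common degree is an idempotent element of S. -/
/-!
Common framework: S-graded rings (rings that are direct sums of additive
subgroups indexed by a set S, with homogeneous products homogeneous),
homogeneous ideals, graded modules, and the various Brown--McCoy radicals.
-/

universe u v w

variable {S : Type v} {R : Type w} [NonUnitalRing R]

namespace SGraded

lemma aux_mem_of_sub_mem (G : SGraded S R) {I : AddSubgroup R} (hI : G.IsHomSubgroup I)
    {t u : S} (hut : u ≠ t) {x y : R} (hx : x ∈ G.component u) (hy : y ∈ G.component t)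
    (hxy : x - y ∈ I) : y ∈ I := by
  classical
  set p : S → Submodule ℤ R := fun s => AddSubgroup.toIntSubmodule (G.component s) with hp
  have hindep : iSupIndep p := G.independent.map_orderIso AddSubgroup.toIntSubmodule
  have hsup : (⨆ s, p s) = ⊤ := by
    rw [hp]
    rw [← (AddSubgroup.toIntSubmodule (M := R)).map_iSup, G.iSup_eq_top]
    exact (AddSubgroup.toIntSubmodule (M := R)).map_top
  have hcompl : IsCompl (p t) (⨆ (j) (_ : j ≠ t), p j) := by
    constructor
    · exact hindep t
    · rw [codisjoint_iff, eq_top_iff, ← hsup]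
      apply iSup_le
      intro j
      by_cases h : j = t
      · subst h; exact le_sup_left
      · exact le_trans (le_iSup₂ (f := fun j (_ : j ≠ t) => p j) j h) le_sup_right
  set π := Submodule.projectionOnto _ _ hcompl
  have hπleft : ∀ z ∈ G.component t, ((π z : R)) = z := by
    intro z hz
    have : π z = ⟨z, hz⟩ := Submodule.linearProjOfIsCompl_apply_left hcompl ⟨z, hz⟩
    rw [this]
  have hπright : ∀ z : R, ∀ v : S, v ≠ t → z ∈ G.component v → ((π z : R)) = 0 := by
    intro z v hv hz
    have hz' : z ∈ ⨆ (j) (_ : j ≠ t), p j := le_iSup₂ (f := fun j (_ : j ≠ t) => p j) v hv hz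
    rw [Submodule.linearProjOfIsCompl_apply_right' hcompl hz']
    rfl
  set f : R →+ R := ((p t).subtype.comp π).toAddMonoidHom
  have hIK : I ≤ AddSubgroup.comap f I := by
    nth_rewrite 1 [hI]
    apply (AddSubgroup.closure_le _).mpr
    rintro a ⟨haI, v, hav⟩
    simp only [SetLike.mem_coe, AddSubgroup.mem_comap]
    by_cases h : v = t
    · subst h
      show ((π a : R)) ∈ I
      rw [hπleft a hav]; exact haI
    · show ((π a : R)) ∈ I
      rw [hπright a v h hav]; exact I.zero_mem
  have := hIK hxy
  rw [AddSubgroup.mem_comap] at this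
  have hfx : f (x - y) = -y := by
    show ((π (x - y) : R)) = -y
    rw [map_sub]
    push_cast
    rw [hπright x u hut hx, hπleft y hy, zero_sub]
  rw [hfx] at this
  simpa using I.neg_mem this

lemma aux_comp_unique (G : SGraded S R) {a : R} {u t : S} (ha : a ∈ G.component u)
    (hb : a ∈ G.component t) (hne : a ≠ 0) : u = t := by
  by_contra h
  have hmem : a ∈ (⨆ (j) (_ : j ≠ u), G.component j) :=
    le_iSup₂ (f := fun j (_ : j ≠ u) => G.component j) t (Ne.symm h) hb
  exact hne ((G.independent u).le_bot ⟨ha, hmem⟩)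

end SGraded

/-- In a regular `S`-graded ring, any two homogeneous unities
modulo a proper modular homogeneous ideal `I` are addable, i.e. have the same degree,
and this common degree is idempotent. -/
theorem unitiesMod_addable (G : SGraded S R) (hreg : G.Regular) (I : AddSubgroup R)
    (hI : G.IsHomIdeal I) (hproper : I ≠ ⊤)
    (e e' : R) (he : G.Homog e) (he' : G.Homog e')
    (hu : IsUnityMod e I) (hu' : IsUnityMod e' I) :
    G.Addable e e' ∧ ∃ s : S, e ∈ G.component s ∧ e' ∈ G.component s ∧ G.IsIdem s := by
  classical
  obtain ⟨hIdeal, hHom⟩ := hI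
  have hnotI : ∀ f : R, IsUnityMod f I → f ∉ I := by
    intro f hf hfI
    apply hproper
    rw [AddSubgroup.eq_top_iff']
    intro a
    have h1 : f * a - a ∈ I := (hf a).1
    have h2 : f * a ∈ I := (hIdeal f hfI a).1
    have h3 := I.sub_mem h2 h1
    simpa using h3
  have heI := hnotI e hu
  have he'I := hnotI e' hu'
  have hne : e ≠ 0 := fun h => heI (h ▸ I.zero_mem)
  have hne' : e' ≠ 0 := fun h => he'I (h ▸ I.zero_mem)
  obtain ⟨s, hes⟩ := he
  obtain ⟨t, he't⟩ := he'
  have hee' : e * e' ≠ 0 := by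
    intro h
    have h1 := (hu e').1
    rw [h, zero_sub] at h1
    exact he'I (by simpa using I.neg_mem h1)
  have he'e' : e' * e' ≠ 0 := by
    intro h
    have h1 := (hu' e').1
    rw [h, zero_sub] at h1
    exact he'I (by simpa using I.neg_mem h1)
  obtain ⟨u1, hu1⟩ := G.mul_cond s t ⟨e, hes, e', he't, hee'⟩
  have hee'u : e * e' ∈ G.component u1 := hu1 e hes e' he't
  have hu1t : u1 = t := by
    by_contra h
    exact he'I (G.aux_mem_of_sub_mem hHom h hee'u he't (hu e').1)
  rw [hu1t] at hee'u
  obtain ⟨u2, hu2⟩ := G.mul_cond t t ⟨e', he't, e', he't, he'e'⟩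
  have he'e'u : e' * e' ∈ G.component u2 := hu2 e' he't e' he't
  have hu2t : u2 = t := by
    by_contra h
    exact he'I (G.aux_mem_of_sub_mem hHom h he'e'u he't (hu' e').1)
  rw [hu2t] at he'e'u hu2
  have hidem : G.IsIdem t := ⟨⟨e', he't, e', he't, he'e'⟩, hu2⟩
  have hadd : G.Addable e e' :=
    (hreg e e' e' ⟨s, hes⟩ ⟨t, he't⟩ ⟨t, he't⟩ hne hne' hne').1 hee' he'e'
      (Or.inr (Or.inr ⟨t, hee'u, he'e'u⟩))
  rcases hadd with h | h | ⟨v, hev, he'v⟩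
  · exact absurd h hne
  · exact absurd h hne'
  have hvt : v = t := G.aux_comp_unique he'v he't hne'
  rw [hvt] at hev he'v
  exact ⟨Or.inr (Or.inr ⟨t, hev, he't⟩), t, hev, he't, hidem⟩
end
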